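/- arXiv:1701.07412 — 2 statements merged into one kernel-verified Lean document; each statement's English description precedes it below -/
import Mathlib

section
/- Let f be an entropic-uncertainty bound for N MUBs in dimension d. Then every fully separable density operator ρ on (ℂ^d)^{⊗n} satisfies 𝒞_N(ρ) ≤ log₂ d − f/N. Equivalently, any density operator ρ on (ℂ^d)^{⊗n} with 𝒞_N(ρ) > log₂ d − f/N is not fully separable (i.e. is entangled). -/
open scoped BigOperators ComplexOrder

namespace Paper

noncomputable section

/-- Base-2 Shannon entropy of a finitely indexed probability vector. -/
def shannon {α : Type*} [Fintype α] (p : α → ℝ) : ℝ :=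
  ∑ a, -(p a * Real.logb 2 (p a))

/-- Joint outcome type for `n` subsystems of local dimension `d`. -/
abbrev Idx (n d : ℕ) := Fin n → Fin d

/-- The projector `|ψ⟩⟨ψ|`. -/
def proj {α : Type*} (ψ : α → ℂ) : Matrix α α ℂ :=
  Matrix.of fun x y => ψ x * (starRingEnd ℂ) (ψ y)

/-- A density operator: positive semidefinite with trace one. -/
def IsDensityOp {α : Type*} [Fintype α] [DecidableEq α] (ρ : Matrix α α ℂ) : Prop :=
  ρ.PosSemidef ∧ ρ.trace = 1

/-- `B` is an orthonormal basis of `ℂ^d` (`B i` is the `i`-th basis vector). -/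
def IsONB {d : ℕ} (B : Fin d → Fin d → ℂ) : Prop :=
  ∀ i j, (∑ x, (starRingEnd ℂ) (B i x) * B j x) = if i = j then 1 else 0

/-- Two bases of `ℂ^d` are mutually unbiased. -/
def MutUnbiased {d : ℕ} (B B' : Fin d → Fin d → ℂ) : Prop :=
  ∀ i j, ‖∑ x, (starRingEnd ℂ) (B i x) * B' j x‖ ^ 2 = 1 / d

/-- Joint outcome distribution of measuring the orthonormal basis `B l` on each factor `l`. -/
def jointProb {n d : ℕ} (ρ : Matrix (Idx n d) (Idx n d) ℂ)
    (B : Fin n → Fin d → Fin d → ℂ) (i : Idx n d) : ℝ :=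
  (∑ x : Idx n d, ∑ y : Idx n d,
    (∏ l, (starRingEnd ℂ) (B l (i l) (x l))) * ρ x y * (∏ l, B l (i l) (y l))).re

/-- Marginal distribution of subsystem `l`. -/
def margAt {n d : ℕ} (p : Idx n d → ℝ) (l : Fin n) (i : Fin d) : ℝ :=
  ∑ x : Idx n d, if x l = i then p x else 0

/-- Insert outcome `i` at position `l` into a tuple of outcomes of the other subsystems. -/
def insertAt {n d : ℕ} (l : Fin n) (i : Fin d) (g : {m : Fin n // m ≠ l} → Fin d) : Idx n d :=
  fun m => if h : m = l then i else g ⟨m, h⟩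

/-- Marginal distribution of all subsystems except `l`. -/
def margRest {n d : ℕ} (p : Idx n d → ℝ) (l : Fin n)
    (g : {m : Fin n // m ≠ l} → Fin d) : ℝ :=
  ∑ i : Fin d, p (insertAt l i g)

/-- Mutual information `I(B⁽ˡ⁾ : B⁽ˡ̄⁾)` between the outcome at subsystem `l` and the
outcomes at the remaining subsystems, for the joint outcome distribution `p`. -/
def mutualInfo {n d : ℕ} (p : Idx n d → ℝ) (l : Fin n) : ℝ :=
  shannon (margAt p l) + shannon (margRest p l) - shannon p

/-- The correlation function `C_N(ρ, {B_k^{(l)}})`. -/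
def CNval {n d : ℕ} (N : ℕ) (ρ : Matrix (Idx n d) (Idx n d) ℂ)
    (B : Fin N → Fin n → Fin d → Fin d → ℂ) : ℝ :=
  (1 / (n * N)) * ∑ k, ∑ l, mutualInfo (jointProb ρ (B k)) l

/-- `B k l` is, for each subsystem `l`, a family of `N` pairwise mutually unbiased
orthonormal bases (indexed by `k`). -/
def ValidMUBs {n d : ℕ} (N : ℕ) (B : Fin N → Fin n → Fin d → Fin d → ℂ) : Prop :=
  (∀ k l, IsONB (B k l)) ∧ ∀ l k k', k ≠ k' → MutUnbiased (B k l) (B k' l)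

/-- The set of values `C_N(ρ, ·)` over all admissible choices of MUBs;
`𝒞_N(ρ)` is the supremum of this set. -/
def CNvalues {n d : ℕ} (N : ℕ) (ρ : Matrix (Idx n d) (Idx n d) ℂ) : Set ℝ :=
  {x | ∃ B : Fin N → Fin n → Fin d → Fin d → ℂ, ValidMUBs N B ∧ x = CNval N ρ B}

/-- Single-subsystem reduced state `tr_{l̄} ρ`. -/
def reducedAt {n d : ℕ} (ρ : Matrix (Idx n d) (Idx n d) ℂ) (l : Fin n) :
    Matrix (Fin d) (Fin d) ℂ :=
  Matrix.of fun i j =>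
    ∑ g : {m : Fin n // m ≠ l} → Fin d, ρ (insertAt l i g) (insertAt l j g)

/-- `ω_d = exp(2πi/d)`. -/
def ω (d : ℕ) : ℂ := Complex.exp (2 * Real.pi * Complex.I / d)

/-- The generalized Pauli operator `X_d`. -/
def Xmat (d : ℕ) : Matrix (Fin d) (Fin d) ℂ :=
  Matrix.of fun i j => if (i : ℕ) = ((j : ℕ) + 1) % d then 1 else 0

/-- The generalized Pauli operator `Z_d`. -/
def Zmat (d : ℕ) : Matrix (Fin d) (Fin d) ℂ :=
  Matrix.of fun i j => if i = j then ω d ^ (i : ℕ) else 0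

/-- The generalized Pauli operator `S_{d,(k₁,k₂)} = X_d^{k₁} Z_d^{k₂}`. -/
def Smat (d : ℕ) (k : Fin d × Fin d) : Matrix (Fin d) (Fin d) ℂ :=
  Xmat d ^ (k.1 : ℕ) * Zmat d ^ (k.2 : ℕ)

/-- Apply a local operator `A l` to each tensor factor of a multipartite vector `ψ`,
i.e. the vector `(⊗_l A l) ψ`. -/
def applyLocal {n d : ℕ} (A : Fin n → Matrix (Fin d) (Fin d) ℂ) (ψ : Idx n d → ℂ) :
    Idx n d → ℂ :=
  fun x => ∑ y : Idx n d, (∏ l, A l (x l) (y l)) * ψ y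

/-- The computational (standard) basis of `ℂ^d`, the eigenbasis of `Z_d`. -/
def stdBasis (d : ℕ) : Fin d → Fin d → ℂ :=
  fun i x => if x = i then 1 else 0

/-- The Fourier basis of `ℂ^d`, the eigenbasis of `X_d`. -/
def fourierBasis (d : ℕ) : Fin d → Fin d → ℂ :=
  fun i x => (((Real.sqrt d)⁻¹ : ℝ) : ℂ) * ω d ^ ((i : ℕ) * (x : ℕ))

/-- The `n`-fold tensor product `⊗_l A l` as a matrix on the joint system. -/
def tensorN {n d : ℕ} (A : Fin n → Matrix (Fin d) (Fin d) ℂ) :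
    Matrix (Idx n d) (Idx n d) ℂ :=
  Matrix.of fun x y => ∏ l, A l (x l) (y l)

/-- Full separability of an `n`-partite density operator. -/
def FullySep {n d : ℕ} (ρ : Matrix (Idx n d) (Idx n d) ℂ) : Prop :=
  ∃ (J : ℕ) (p : Fin J → ℝ) (σ : Fin J → Fin n → Matrix (Fin d) (Fin d) ℂ),
    (∀ j, 0 ≤ p j) ∧ (∑ j, p j) = 1 ∧ (∀ j l, IsDensityOp (σ j l)) ∧
    ρ = ∑ j, p j • tensorN (σ j)

/-- generalized GHZ state `(1/√d) ∑_i |i⟩^{⊗n}`. -/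
def GHZvec (d n : ℕ) : Idx n d → ℂ :=
  fun x => if ∀ l l', x l = x l' then (((Real.sqrt d)⁻¹ : ℝ) : ℂ) else 0


/-- Outcome distribution of measuring the basis `B` on the single-system state `σ`. -/
def prob1 {d : ℕ} (σ : Matrix (Fin d) (Fin d) ℂ) (B : Fin d → Fin d → ℂ) (i : Fin d) : ℝ :=
  (∑ x, ∑ y, (starRingEnd ℂ) (B i x) * σ x y * B i y).re

/-- `f` is an entropic-uncertainty bound for `N` MUBs in dimension `d`:
`∑_k H(B_k|σ) ≥ f` for every set of `N` MUBs and every density operator `σ`. -/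
def EntropicBound (d N : ℕ) (f : ℝ) : Prop :=
  ∀ B : Fin N → Fin d → Fin d → ℂ, (∀ k, IsONB (B k)) →
    (∀ k k', k ≠ k' → MutUnbiased (B k) (B k')) →
    ∀ σ : Matrix (Fin d) (Fin d) ℂ, IsDensityOp σ →
      f ≤ ∑ k, shannon (prob1 σ (B k))


/-! ### Auxiliary lemmas -/

section Aux

/-- natural-log entropy -/
def ent {α : Type*} [Fintype α] (p : α → ℝ) : ℝ :=
  ∑ a, -(p a * Real.log (p a))

lemma shannon_eq {α : Type*} [Fintype α] (p : α → ℝ) :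
    shannon p = (1 / Real.log 2) * ent p := by
  unfold shannon ent
  rw [Finset.mul_sum]
  refine Finset.sum_congr rfl fun a _ => ?_
  rw [Real.logb]
  ring

lemma log2_pos : (0:ℝ) < Real.log 2 := Real.log_pos (by norm_num)

lemma ent_le_log_card {α : Type*} [Fintype α] (p : α → ℝ)
    (h0 : ∀ a, 0 ≤ p a) (h1 : ∑ a, p a = 1) :
    ent p ≤ Real.log (Fintype.card α) := by
  have hne : Nonempty α := by
    by_contra h
    rw [not_nonempty_iff] at h
    simp [Finset.univ_eq_empty] at h1
  have hd : (0:ℝ) < (Fintype.card α : ℝ) := by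
    exact_mod_cast Fintype.card_pos
  have key : ∀ a : α, -(p a * Real.log (p a)) ≤
      p a * Real.log (Fintype.card α) + (1 / (Fintype.card α : ℝ) - p a) := by
    intro a
    rcases eq_or_lt_of_le (h0 a) with h | h
    · rw [← h]
      have h5 : (0:ℝ) ≤ 1 / (Fintype.card α : ℝ) := by positivity
      simpa using h5
    · have hx : (0:ℝ) < 1 / (p a * Fintype.card α) := by positivity
      have := Real.log_le_sub_one_of_pos hx
      have hlog : Real.log (1 / (p a * (Fintype.card α : ℝ)))
          = -(Real.log (p a) + Real.log (Fintype.card α)) := by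
        rw [one_div, Real.log_inv, Real.log_mul (ne_of_gt h) (ne_of_gt hd)]
      rw [hlog] at this
      have h2 : p a * -(Real.log (p a) + Real.log (Fintype.card α)) ≤
          p a * (1 / (p a * (Fintype.card α : ℝ)) - 1) :=
        mul_le_mul_of_nonneg_left this (le_of_lt h)
      have h3 : p a * (1 / (p a * (Fintype.card α : ℝ)) - 1)
          = 1 / (Fintype.card α : ℝ) - p a := by
        field_simp
      nlinarith [h2, h3]
  calc ent p ≤ ∑ a, (p a * Real.log (Fintype.card α) + (1 / (Fintype.card α : ℝ) - p a)) :=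
        Finset.sum_le_sum fun a _ => key a
    _ = Real.log (Fintype.card α) := by
        rw [Finset.sum_add_distrib, ← Finset.sum_mul, h1, Finset.sum_sub_distrib, h1]
        simp only [Finset.sum_const, Finset.card_univ, nsmul_eq_mul]
        field_simp
        ring

lemma shannon_le_logb_card {α : Type*} [Fintype α] (p : α → ℝ)
    (h0 : ∀ a, 0 ≤ p a) (h1 : ∑ a, p a = 1) :
    shannon p ≤ Real.logb 2 (Fintype.card α) := by
  rw [shannon_eq, Real.logb]
  have := ent_le_log_card p h0 h1
  have h2 := mul_le_mul_of_nonneg_left this (le_of_lt (one_div_pos.mpr log2_pos))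
  calc (1 / Real.log 2) * ent p ≤ (1 / Real.log 2) * Real.log (Fintype.card α) := h2
    _ = Real.log (Fintype.card α) / Real.log 2 := by ring

lemma sum_swap3 {α γ J M : Type*} [Fintype α] [Fintype γ] [Fintype J]
    [AddCommMonoid M] (F : α → γ → J → M) :
    ∑ a, ∑ g, ∑ j, F a g j = ∑ j, ∑ a, ∑ g, F a g j :=
  calc ∑ a, ∑ g, ∑ j, F a g j
      = ∑ a, ∑ j, ∑ g, F a g j := Finset.sum_congr rfl fun _ _ => Finset.sum_comm
    _ = ∑ j, ∑ a, ∑ g, F a g j := Finset.sum_comm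

lemma key_ent {J α γ : Type*} [Fintype J] [Fintype α] [Fintype γ]
    (c : J → ℝ) (r : J → α → ℝ) (s : J → γ → ℝ)
    (hc : ∀ j, 0 ≤ c j) (hr : ∀ j a, 0 ≤ r j a) (hs : ∀ j g, 0 ≤ s j g)
    (hr1 : ∀ j, ∑ a, r j a = 1) (hs1 : ∀ j, ∑ g, s j g = 1) (hc1 : ∑ j, c j = 1) :
    (∑ j, c j * ent (r j)) + ent (fun g => ∑ j, c j * s j g)
      ≤ ent (fun p : α × γ => ∑ j, c j * (r j p.1 * s j p.2)) := by
  set q : α → γ → ℝ := fun a g => ∑ j, c j * (r j a * s j g) with hq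
  set qB : γ → ℝ := fun g => ∑ j, c j * s j g with hqB
  set A : J → α → γ → ℝ := fun j a g => c j * (r j a * s j g) with hA
  have hA0 : ∀ j a g, 0 ≤ A j a g := fun j a g =>
    mul_nonneg (hc j) (mul_nonneg (hr j a) (hs j g))
  have hq0 : ∀ a g, 0 ≤ q a g := fun a g => Finset.sum_nonneg fun j _ => hA0 j a g
  have hqB0 : ∀ g, 0 ≤ qB g := fun g =>
    Finset.sum_nonneg fun j _ => mul_nonneg (hc j) (hs j g)
  have hsumA_a : ∀ j g, ∑ a, A j a g = c j * s j g := by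
    intro j g
    have h1 : ∀ a, A j a g = (c j * s j g) * r j a := fun a => by rw [hA]; ring
    rw [Finset.sum_congr rfl fun a _ => h1 a, ← Finset.mul_sum, hr1 j, mul_one]
  have hsumA_g : ∀ j a, ∑ g, A j a g = c j * r j a := by
    intro j a
    have h1 : ∀ g, A j a g = (c j * r j a) * s j g := fun g => by rw [hA]; ring
    rw [Finset.sum_congr rfl fun g _ => h1 g, ← Finset.mul_sum, hs1 j, mul_one]
  have hmarg : ∀ g, ∑ a, q a g = qB g := by
    intro g
    rw [hq, hqB, Finset.sum_comm]
    exact Finset.sum_congr rfl fun j _ => hsumA_a j g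
  have hqBsum : ∑ g, qB g = 1 := by
    have h1 : ∀ g, qB g = ∑ j, c j * s j g := fun g => rfl
    rw [Finset.sum_congr rfl fun g _ => h1 g, Finset.sum_comm]
    rw [Finset.sum_congr rfl fun j (_ : j ∈ Finset.univ) => (Finset.mul_sum _ _ _).symm]
    rw [Finset.sum_congr rfl fun j (_ : j ∈ Finset.univ) => by rw [hs1 j, mul_one]]
    exact hc1
  have E1 : ent (fun p : α × γ => q p.1 p.2)
      = -∑ j, ∑ a, ∑ g, A j a g * Real.log (q a g) := by
    unfold ent
    rw [Fintype.sum_prod_type, ← sum_swap3 (fun a g j => A j a g * Real.log (q a g)),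
      ← Finset.sum_neg_distrib]
    refine Finset.sum_congr rfl fun a _ => ?_
    rw [← Finset.sum_neg_distrib]
    refine Finset.sum_congr rfl fun g _ => ?_
    rw [← Finset.sum_mul]
  have E2 : ent qB = -∑ j, ∑ a, ∑ g, A j a g * Real.log (qB g) := by
    have e2g : ∀ g, qB g * Real.log (qB g) = ∑ j, ∑ a, A j a g * Real.log (qB g) := by
      intro g
      have h1 : ∀ j, ∑ a, A j a g * Real.log (qB g) = (c j * s j g) * Real.log (qB g) :=
        fun j => by rw [← Finset.sum_mul, hsumA_a]
      rw [Finset.sum_congr rfl fun j _ => h1 j, ← Finset.sum_mul]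
    calc ent qB = ∑ g, -(∑ j, ∑ a, A j a g * Real.log (qB g)) :=
          Finset.sum_congr rfl fun g _ => by rw [← e2g g]
      _ = -∑ g, ∑ j, ∑ a, A j a g * Real.log (qB g) := Finset.sum_neg_distrib _
      _ = -∑ a, ∑ g, ∑ j, A j a g * Real.log (qB g) := by
          rw [sum_swap3 (fun g j a => A j a g * Real.log (qB g))]
      _ = -∑ j, ∑ a, ∑ g, A j a g * Real.log (qB g) := by
          rw [sum_swap3 (fun a g j => A j a g * Real.log (qB g))]
  have E3 : ∑ j, c j * ent (r j) = -∑ j, ∑ a, ∑ g, A j a g * Real.log (r j a) := by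
    rw [← Finset.sum_neg_distrib]
    refine Finset.sum_congr rfl fun j _ => ?_
    unfold ent
    rw [Finset.mul_sum, ← Finset.sum_neg_distrib]
    refine Finset.sum_congr rfl fun a _ => ?_
    rw [Finset.sum_congr rfl fun g (_ : g ∈ Finset.univ) => rfl, ← Finset.sum_mul, hsumA_g]
    ring
  set D : J → α → γ → ℝ := fun j a g => c j * s j g * (q a g / qB g) - A j a g with hD
  have term_bound : ∀ j a g, A j a g * Real.log (q a g) ≤
      A j a g * Real.log (r j a) + A j a g * Real.log (qB g) + D j a g := by
    intro j a g
    rcases eq_or_lt_of_le (hA0 j a g) with h | h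
    · rw [← h]
      simp only [zero_mul, add_zero, zero_add, hD]
      rw [← h]
      have : 0 ≤ c j * s j g * (q a g / qB g) :=
        mul_nonneg (mul_nonneg (hc j) (hs j g)) (div_nonneg (hq0 a g) (hqB0 g))
      linarith
    · have h' : 0 < c j * (r j a * s j g) := h
      have hcj : 0 < c j := by
        rcases (hc j).lt_or_eq with h1 | h1
        · exact h1
        · rw [← h1] at h'; simp at h'
      have hra : 0 < r j a := by
        rcases (hr j a).lt_or_eq with h1 | h1
        · exact h1
        · rw [← h1] at h'; simp at h'
      have hsg : 0 < s j g := by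
        rcases (hs j g).lt_or_eq with h1 | h1
        · exact h1
        · rw [← h1] at h'; simp at h'
      have hqpos : 0 < q a g :=
        lt_of_lt_of_le h (Finset.single_le_sum (f := fun j' => A j' a g)
          (fun j' _ => hA0 j' a g) (Finset.mem_univ j))
      have hqBpos : 0 < qB g :=
        lt_of_lt_of_le (mul_pos hcj hsg) (Finset.single_le_sum (f := fun j' => c j' * s j' g)
          (fun j' _ => mul_nonneg (hc j') (hs j' g)) (Finset.mem_univ j))
      have hlog : Real.log (q a g) - Real.log (r j a) - Real.log (qB g)
          ≤ q a g / (r j a * qB g) - 1 := by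
        have h1 := Real.log_le_sub_one_of_pos
          (show 0 < q a g / (r j a * qB g) by positivity)
        rw [Real.log_div (ne_of_gt hqpos) (by positivity),
          Real.log_mul (ne_of_gt hra) (ne_of_gt hqBpos)] at h1
        linarith
      have h2 := mul_le_mul_of_nonneg_left hlog (le_of_lt h)
      have h3 : A j a g * (q a g / (r j a * qB g) - 1) = D j a g := by
        simp only [hD, hA]
        field_simp
      rw [h3, mul_sub, mul_sub] at h2
      linarith
  have S2 : ∑ j, ∑ a, ∑ g, A j a g = 1 := by
    rw [Finset.sum_congr rfl fun j (_ : j ∈ Finset.univ) =>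
      Finset.sum_congr rfl fun a (_ : a ∈ Finset.univ) => hsumA_g j a]
    rw [Finset.sum_congr rfl fun j (_ : j ∈ Finset.univ) => by
      rw [← Finset.mul_sum, hr1 j, mul_one]]
    exact hc1
  have S1 : ∑ j, ∑ a, ∑ g, c j * s j g * (q a g / qB g) = 1 := by
    rw [← sum_swap3 (fun a g j => c j * s j g * (q a g / qB g)),
      ← sum_swap3 (fun g j a => c j * s j g * (q a g / qB g))]
    have hg : ∀ g, ∑ j, ∑ a, c j * s j g * (q a g / qB g) = qB g := by
      intro g
      have inner : ∀ j, ∑ a, c j * s j g * (q a g / qB g)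
          = c j * s j g * (qB g / qB g) := by
        intro j
        rw [← Finset.mul_sum, ← Finset.sum_div, hmarg g]
      rw [Finset.sum_congr rfl fun j _ => inner j]
      by_cases h0 : qB g = 0
      · rw [h0]
        simp
      · rw [div_self h0]
        simp only [mul_one]
        rfl
    rw [Finset.sum_congr rfl fun g _ => hg g, hqBsum]
  have hDsum : ∑ j, ∑ a, ∑ g, D j a g = 0 := by
    simp only [hD, Finset.sum_sub_distrib]
    rw [S1, S2, sub_self]
  have star : ∑ j, ∑ a, ∑ g, A j a g * Real.log (q a g)
      ≤ (∑ j, ∑ a, ∑ g, A j a g * Real.log (r j a))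
        + (∑ j, ∑ a, ∑ g, A j a g * Real.log (qB g)) := by
    calc ∑ j, ∑ a, ∑ g, A j a g * Real.log (q a g)
        ≤ ∑ j, ∑ a, ∑ g, (A j a g * Real.log (r j a)
            + A j a g * Real.log (qB g) + D j a g) :=
          Finset.sum_le_sum fun j _ => Finset.sum_le_sum fun a _ =>
            Finset.sum_le_sum fun g _ => term_bound j a g
      _ = (∑ j, ∑ a, ∑ g, A j a g * Real.log (r j a))
            + (∑ j, ∑ a, ∑ g, A j a g * Real.log (qB g))
            + ∑ j, ∑ a, ∑ g, D j a g := by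
          simp only [Finset.sum_add_distrib]
      _ = _ := by rw [hDsum, add_zero]
  have hent : ent (fun p : α × γ => ∑ j, c j * (r j p.1 * s j p.2))
      = ent (fun p : α × γ => q p.1 p.2) := rfl
  rw [E3, E2, hent, E1]
  linarith

lemma key_shannon {J α γ : Type*} [Fintype J] [Fintype α] [Fintype γ]
    (c : J → ℝ) (r : J → α → ℝ) (s : J → γ → ℝ)
    (hc : ∀ j, 0 ≤ c j) (hr : ∀ j a, 0 ≤ r j a) (hs : ∀ j g, 0 ≤ s j g)
    (hr1 : ∀ j, ∑ a, r j a = 1) (hs1 : ∀ j, ∑ g, s j g = 1) (hc1 : ∑ j, c j = 1) :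
    (∑ j, c j * shannon (r j)) + shannon (fun g => ∑ j, c j * s j g)
      ≤ shannon (fun p : α × γ => ∑ j, c j * (r j p.1 * s j p.2)) := by
  have h := key_ent c r s hc hr hs hr1 hs1 hc1
  have h2 := mul_le_mul_of_nonneg_left h (le_of_lt (one_div_pos.mpr log2_pos))
  rw [mul_add, Finset.mul_sum] at h2
  rw [shannon_eq, shannon_eq]
  calc (∑ j, c j * shannon (r j)) + 1 / Real.log 2 * ent (fun g => ∑ j, c j * s j g)
      = (∑ j, 1 / Real.log 2 * (c j * ent (r j)))
        + 1 / Real.log 2 * ent (fun g => ∑ j, c j * s j g) := by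
        refine congrArg (· + _) (Finset.sum_congr rfl fun j _ => ?_)
        rw [shannon_eq]
        ring
    _ ≤ 1 / Real.log 2 * ent (fun p : α × γ => ∑ j, c j * (r j p.1 * s j p.2)) := h2

lemma quadform_eq {d : ℕ} (σ : Matrix (Fin d) (Fin d) ℂ) (v : Fin d → ℂ) :
    ∑ x, ∑ y, (starRingEnd ℂ) (v x) * σ x y * v y
      = dotProduct (star v) (σ.mulVec v) := by
  simp only [dotProduct, Matrix.mulVec, Pi.star_apply, RCLike.star_def,
    Finset.mul_sum, mul_assoc]

lemma quadform_real {d : ℕ} {σ : Matrix (Fin d) (Fin d) ℂ} (hσ : σ.PosSemidef)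
    (v : Fin d → ℂ) :
    ∑ x, ∑ y, (starRingEnd ℂ) (v x) * σ x y * v y
      = (((∑ x, ∑ y, (starRingEnd ℂ) (v x) * σ x y * v y).re : ℝ) : ℂ)
    ∧ 0 ≤ (∑ x, ∑ y, (starRingEnd ℂ) (v x) * σ x y * v y).re := by
  have h := hσ.dotProduct_mulVec_nonneg v
  rw [Complex.nonneg_iff] at h
  rw [quadform_eq]
  exact ⟨Complex.ext rfl (by simp [← h.2]), h.1⟩

lemma prob1_nonneg {d : ℕ} {σ : Matrix (Fin d) (Fin d) ℂ} (hσ : σ.PosSemidef)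
    (B : Fin d → Fin d → ℂ) (i : Fin d) : 0 ≤ prob1 σ B i :=
  (quadform_real hσ (B i)).2

lemma prob1_complex {d : ℕ} {σ : Matrix (Fin d) (Fin d) ℂ} (hσ : σ.PosSemidef)
    (B : Fin d → Fin d → ℂ) (i : Fin d) :
    ∑ x, ∑ y, (starRingEnd ℂ) (B i x) * σ x y * B i y = ((prob1 σ B i : ℝ) : ℂ) :=
  (quadform_real hσ (B i)).1

lemma sum_prob1 {d : ℕ} {σ : Matrix (Fin d) (Fin d) ℂ} (hσ : IsDensityOp σ)
    {B : Fin d → Fin d → ℂ} (hB : IsONB B) : ∑ i, prob1 σ B i = 1 := by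
  have hcol : ∀ x y : Fin d, (∑ i, (starRingEnd ℂ) (B i x) * B i y)
      = if x = y then 1 else 0 := by
    set M : Matrix (Fin d) (Fin d) ℂ := Matrix.of fun i x => B i x with hM
    have h1 : M * M.conjTranspose = 1 := by
      ext i j
      simp only [Matrix.mul_apply, Matrix.conjTranspose_apply, hM, Matrix.of_apply]
      have e : ∀ x, B i x * star (B j x)
          = (starRingEnd ℂ) ((starRingEnd ℂ) (B i x) * B j x) := by
        intro x
        simp only [map_mul, Complex.conj_conj, RCLike.star_def]
        try ring
      rw [Finset.sum_congr rfl fun x _ => e x, ← map_sum (starRingEnd ℂ), hB i j]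
      rw [Matrix.one_apply]
      split <;> simp
    have h2 : M.conjTranspose * M = 1 := mul_eq_one_comm.mp h1
    intro x y
    have := congrArg (fun N => N x y) h2
    simp only [Matrix.mul_apply, Matrix.conjTranspose_apply, hM, Matrix.of_apply,
      Matrix.one_apply, RCLike.star_def] at this
    exact this
  unfold prob1
  rw [← Complex.re_sum]
  have key : (∑ i, ∑ x, ∑ y, (starRingEnd ℂ) (B i x) * σ x y * B i y) = σ.trace := by
    rw [Finset.sum_comm]
    have e1 : ∀ x, (∑ i, ∑ y, (starRingEnd ℂ) (B i x) * σ x y * B i y)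
        = ∑ y, σ x y * ∑ i, (starRingEnd ℂ) (B i x) * B i y := by
      intro x
      rw [Finset.sum_comm]
      refine Finset.sum_congr rfl fun y _ => ?_
      rw [Finset.mul_sum]
      exact Finset.sum_congr rfl fun i _ => by ring
    rw [Finset.sum_congr rfl fun x _ => e1 x]
    rw [Finset.sum_congr rfl fun x (_ : x ∈ Finset.univ) => Finset.sum_congr rfl
      fun y (_ : y ∈ Finset.univ) => by rw [hcol x y]]
    simp only [mul_ite, mul_one, mul_zero, Finset.sum_ite_eq, Finset.mem_univ, if_true]
    rfl
  rw [key, hσ.2]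
  simp

lemma jointProb_tensor {n d : ℕ} (σ : Fin n → Matrix (Fin d) (Fin d) ℂ)
    (hσ : ∀ l, (σ l).PosSemidef) (C : Fin n → Fin d → Fin d → ℂ) (i : Idx n d) :
    (∑ x : Idx n d, ∑ y : Idx n d,
        (∏ l, (starRingEnd ℂ) (C l (i l) (x l))) * tensorN σ x y * (∏ l, C l (i l) (y l)))
      = (((∏ l, prob1 (σ l) (C l) (i l) : ℝ)) : ℂ) := by
  have e1 : ∀ x y : Idx n d,
      (∏ l, (starRingEnd ℂ) (C l (i l) (x l))) * tensorN σ x y * (∏ l, C l (i l) (y l))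
      = ∏ l, ((starRingEnd ℂ) (C l (i l) (x l)) * σ l (x l) (y l) * C l (i l) (y l)) := by
    intro x y
    rw [tensorN, Matrix.of_apply, ← Finset.prod_mul_distrib, ← Finset.prod_mul_distrib]
  rw [Finset.sum_congr rfl fun x (_ : x ∈ Finset.univ) => Finset.sum_congr rfl
    fun y (_ : y ∈ Finset.univ) => e1 x y]
  have e2 : ∀ x : Idx n d,
      (∑ y : Idx n d, ∏ l,
          ((starRingEnd ℂ) (C l (i l) (x l)) * σ l (x l) (y l) * C l (i l) (y l)))
      = ∏ l, ∑ b, ((starRingEnd ℂ) (C l (i l) (x l)) * σ l (x l) b * C l (i l) b) :=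
    fun x => (Fintype.prod_sum
      (fun l b => (starRingEnd ℂ) (C l (i l) (x l)) * σ l (x l) b * C l (i l) b)).symm
  rw [Finset.sum_congr rfl fun x (_ : x ∈ Finset.univ) => e2 x,
    ← Fintype.prod_sum (fun (l : Fin n) (a : Fin d) =>
      ∑ b, (starRingEnd ℂ) (C l (i l) a) * σ l a b * C l (i l) b)]
  have e3 : ∀ l, (∑ a, ∑ b, ((starRingEnd ℂ) (C l (i l) a) * σ l a b * C l (i l) b))
      = ((prob1 (σ l) (C l) (i l) : ℝ) : ℂ) := fun l => prob1_complex (hσ l) (C l) (i l)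
  rw [Finset.prod_congr rfl fun l _ => e3 l, Complex.ofReal_prod]

lemma jointProb_sep {n d J : ℕ} (p : Fin J → ℝ)
    (σ : Fin J → Fin n → Matrix (Fin d) (Fin d) ℂ)
    (hσ : ∀ j l, (σ j l).PosSemidef) (C : Fin n → Fin d → Fin d → ℂ) (i : Idx n d) :
    jointProb (∑ j, p j • tensorN (σ j)) C i
      = ∑ j, p j * ∏ l, prob1 (σ j l) (C l) (i l) := by
  unfold jointProb
  have e1 : ∀ x y : Idx n d,
      (∏ l, (starRingEnd ℂ) (C l (i l) (x l))) * ((∑ j, p j • tensorN (σ j)) x y)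
        * (∏ l, C l (i l) (y l))
      = ∑ j, (p j : ℂ) * ((∏ l, (starRingEnd ℂ) (C l (i l) (x l))) * (tensorN (σ j) x y)
          * (∏ l, C l (i l) (y l))) := by
    intro x y
    simp only [Matrix.sum_apply, Matrix.smul_apply, Finset.mul_sum, Finset.sum_mul,
      Complex.real_smul]
    exact Finset.sum_congr rfl fun j _ => by ring
  rw [Finset.sum_congr rfl fun x (_ : x ∈ Finset.univ) => Finset.sum_congr rfl
    fun y (_ : y ∈ Finset.univ) => e1 x y]
  rw [sum_swap3 (fun x y j => (p j : ℂ) * ((∏ l, (starRingEnd ℂ) (C l (i l) (x l)))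
    * (tensorN (σ j) x y) * (∏ l, C l (i l) (y l))))]
  rw [Complex.re_sum]
  refine Finset.sum_congr rfl fun j _ => ?_
  rw [Finset.sum_congr rfl fun x (_ : x ∈ Finset.univ) => (Finset.mul_sum _ _ _).symm]
  rw [← Finset.mul_sum, jointProb_tensor (σ j) (hσ j) C i, ← Complex.ofReal_mul,
    Complex.ofReal_re]

def restrAt {n d : ℕ} (l : Fin n) (x : Idx n d) : {m : Fin n // m ≠ l} → Fin d :=
  fun m => x m.1

lemma insertAt_self {n d : ℕ} (l : Fin n) (i : Fin d) (g : {m : Fin n // m ≠ l} → Fin d) :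
    insertAt l i g l = i := dif_pos rfl

lemma insertAt_other {n d : ℕ} (l : Fin n) (i : Fin d) (g : {m : Fin n // m ≠ l} → Fin d)
    (m : {m : Fin n // m ≠ l}) : insertAt l i g m.1 = g m := by
  rw [insertAt, dif_neg m.2]

def splitEquiv {n d : ℕ} (l : Fin n) : Idx n d ≃ Fin d × ({m : Fin n // m ≠ l} → Fin d) where
  toFun x := (x l, restrAt l x)
  invFun p := insertAt l p.1 p.2
  left_inv x := by
    funext m
    by_cases h : m = l
    · subst h; exact insertAt_self _ _ _
    · exact insertAt_other _ _ _ ⟨m, h⟩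
  right_inv p := by
    refine Prod.ext (insertAt_self _ _ _) (funext fun m => ?_)
    exact insertAt_other _ _ _ m

lemma sum_split {n d : ℕ} {M : Type*} [AddCommMonoid M] (l : Fin n) (h : Idx n d → M) :
    ∑ x, h x = ∑ i : Fin d, ∑ g : {m : Fin n // m ≠ l} → Fin d, h (insertAt l i g) :=
  calc ∑ x, h x
      = ∑ p : Fin d × ({m : Fin n // m ≠ l} → Fin d), h ((splitEquiv l).symm p) :=
        (Equiv.sum_comp (splitEquiv l).symm h).symm
    _ = ∑ i : Fin d, ∑ g, h (insertAt l i g) := Fintype.sum_prod_type _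

lemma prod_split {n : ℕ} {M : Type*} [CommMonoid M] (l : Fin n) (f : Fin n → M) :
    ∏ m, f m = f l * ∏ m : {m : Fin n // m ≠ l}, f m.1 := by
  rw [← Finset.mul_prod_erase Finset.univ f (Finset.mem_univ l)]
  congr 1
  exact Finset.prod_subtype (Finset.univ.erase l)
    (fun x => by simp [Finset.mem_erase]) f

lemma mutualInfo_bound {n d J : ℕ} (p : Fin J → ℝ)
    (σ : Fin J → Fin n → Matrix (Fin d) (Fin d) ℂ)
    (hp : ∀ j, 0 ≤ p j) (hp1 : ∑ j, p j = 1) (hσ : ∀ j l, IsDensityOp (σ j l))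
    (C : Fin n → Fin d → Fin d → ℂ) (hC : ∀ l, IsONB (C l)) (l : Fin n) :
    mutualInfo (jointProb (∑ j, p j • tensorN (σ j)) C) l
      ≤ Real.logb 2 d - ∑ j, p j * shannon (prob1 (σ j l) (C l)) := by
  set q : Idx n d → ℝ := jointProb (∑ j, p j • tensorN (σ j)) C with hqdef
  set r : Fin J → Fin n → Fin d → ℝ := fun j m => prob1 (σ j m) (C m) with hrdef
  set s : Fin J → ({m : Fin n // m ≠ l} → Fin d) → ℝ :=
    fun j g => ∏ m : {m : Fin n // m ≠ l}, r j m.1 (g m) with hsdef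
  have hr0 : ∀ j m a, 0 ≤ r j m a := fun j m a => prob1_nonneg (hσ j m).1 (C m) a
  have hr1 : ∀ j m, ∑ a, r j m a = 1 := fun j m => sum_prob1 (hσ j m) (hC m)
  have hs0 : ∀ j g, 0 ≤ s j g := fun j g =>
    Finset.prod_nonneg fun m _ => hr0 j m.1 (g m)
  have hs1 : ∀ j, ∑ g, s j g = 1 := by
    intro j
    rw [hsdef]
    rw [← Fintype.prod_sum (fun (m : {m : Fin n // m ≠ l}) (a : Fin d) => r j m.1 a)]
    rw [Finset.prod_congr rfl fun m _ => hr1 j m.1]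
    exact Finset.prod_const_one
  have hq : ∀ i, q i = ∑ j, p j * ∏ m, r j m (i m) :=
    jointProb_sep p σ (fun j m => (hσ j m).1) C
  have hins : ∀ j i g, (∏ m, r j m (insertAt l i g m)) = r j l i * s j g := by
    intro j i g
    rw [prod_split l (fun m => r j m (insertAt l i g m))]
    rw [insertAt_self]
    congr 1
    exact Finset.prod_congr rfl fun m _ => by rw [insertAt_other]
  have hqi : ∀ i g, q (insertAt l i g) = ∑ j, p j * (r j l i * s j g) := by
    intro i g
    rw [hq]
    exact Finset.sum_congr rfl fun j _ => by rw [hins]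
  have hmargAt : margAt q l = fun i => ∑ j, p j * r j l i := by
    funext i
    unfold margAt
    rw [sum_split l (fun x => if x l = i then q x else 0)]
    have e1 : ∀ a g, (if (insertAt l a g) l = i then q (insertAt l a g) else 0)
        = if a = i then q (insertAt l a g) else 0 := by
      intro a g
      rw [insertAt_self]
    rw [Finset.sum_congr rfl fun a (_ : a ∈ Finset.univ) => Finset.sum_congr rfl
      fun g (_ : g ∈ Finset.univ) => e1 a g]
    have e2 : ∀ a, (∑ g : {m : Fin n // m ≠ l} → Fin d,
        if a = i then q (insertAt l a g) else 0)
        = if a = i then ∑ g, q (insertAt l a g) else 0 := by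
      intro a
      split <;> simp
    rw [Finset.sum_congr rfl fun a _ => e2 a,
      Finset.sum_ite_eq' Finset.univ i (fun a => ∑ g, q (insertAt l a g))]
    simp only [Finset.mem_univ, if_true]
    rw [Finset.sum_congr rfl fun g _ => hqi i g, Finset.sum_comm]
    refine Finset.sum_congr rfl fun j _ => ?_
    have e3 : ∀ g, p j * (r j l i * s j g) = (p j * r j l i) * s j g := fun g => by ring
    rw [Finset.sum_congr rfl fun g _ => e3 g, ← Finset.mul_sum, hs1 j, mul_one]
  have hmargRest : margRest q l = fun g => ∑ j, p j * s j g := by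
    funext g
    unfold margRest
    rw [Finset.sum_congr rfl fun i _ => hqi i g, Finset.sum_comm]
    refine Finset.sum_congr rfl fun j _ => ?_
    have e3 : ∀ i, p j * (r j l i * s j g) = (p j * s j g) * r j l i := fun i => by ring
    rw [Finset.sum_congr rfl fun i _ => e3 i, ← Finset.mul_sum, hr1 j l, mul_one]
  have hshq : shannon q = shannon (fun pr : Fin d × ({m : Fin n // m ≠ l} → Fin d) =>
      ∑ j, p j * (r j l pr.1 * s j pr.2)) := by
    unfold shannon
    rw [sum_split l (fun x => -(q x * Real.logb 2 (q x))), Fintype.sum_prod_type]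
    exact Finset.sum_congr rfl fun i (_ : i ∈ Finset.univ) => Finset.sum_congr rfl
      fun g (_ : g ∈ Finset.univ) => by rw [hqi i g]
  have hd : Fintype.card (Fin d) = d := Fintype.card_fin d
  have h1 : shannon (margAt q l) ≤ Real.logb 2 d := by
    rw [hmargAt]
    have := shannon_le_logb_card (fun i => ∑ j, p j * r j l i)
      (fun i => Finset.sum_nonneg fun j _ => mul_nonneg (hp j) (hr0 j l i))
      (by
        rw [Finset.sum_comm]
        rw [Finset.sum_congr rfl fun j (_ : j ∈ Finset.univ) => (Finset.mul_sum _ _ _).symm]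
        rw [Finset.sum_congr rfl fun j (_ : j ∈ Finset.univ) => by rw [hr1 j l, mul_one]]
        exact hp1)
    rwa [hd] at this
  have h2 : (∑ j, p j * shannon (r j l)) + shannon (fun g => ∑ j, p j * s j g)
      ≤ shannon (fun pr : Fin d × ({m : Fin n // m ≠ l} → Fin d) =>
        ∑ j, p j * (r j l pr.1 * s j pr.2)) :=
    key_shannon p (fun j => r j l) s hp (fun j a => hr0 j l a) hs0
      (fun j => hr1 j l) hs1 hp1
  unfold mutualInfo
  rw [hmargRest, hshq]
  have hrl : ∀ j, shannon (r j l) = shannon (prob1 (σ j l) (C l)) := fun j => rfl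
  have hsum : (∑ j, p j * shannon (r j l)) = ∑ j, p j * shannon (prob1 (σ j l) (C l)) :=
    Finset.sum_congr rfl fun j _ => by rw [hrl j]
  linarith [h1, h2, hsum]

end Aux

/-- Lemma 6: every fully separable state satisfies `𝒞_N(ρ) ≤ log₂ d − f/N`; hence any
state exceeding this bound is entangled. -/
theorem fully_separable_CN_bound
    (n d N : ℕ) (hn : 1 ≤ n) (f : ℝ) (hf : EntropicBound d N f)
    (ρ : Matrix (Idx n d) (Idx n d) ℂ) (hρ : IsDensityOp ρ) (hsep : FullySep ρ) :
    ∀ x ∈ CNvalues N ρ, x ≤ Real.logb 2 d - f / N := by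
  obtain ⟨J, p, σ, hp0, hp1, hdens, hρeq⟩ := hsep
  have hd1 : 1 ≤ d := by
    by_contra hcon
    have hd0 : d = 0 := by omega
    subst hd0
    haveI : IsEmpty (Idx n 0) := ⟨fun x => (x ⟨0, hn⟩).elim0⟩
    have ht := hρ.2
    simp [Matrix.trace, Finset.univ_eq_empty] at ht
  have hdR : (1:ℝ) ≤ (d:ℝ) := by exact_mod_cast hd1
  have hlb : 0 ≤ Real.logb 2 d := Real.logb_nonneg (by norm_num) hdR
  intro x hx
  obtain ⟨B, hB, hxeq⟩ := hx
  rcases Nat.eq_zero_or_pos N with hN0 | hNpos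
  · subst hN0
    rw [hxeq]
    unfold CNval
    simp only [Finset.univ_eq_empty, Finset.sum_empty, mul_zero, Nat.cast_zero,
      div_zero, sub_zero]
    exact hlb
  · have hnR : (0:ℝ) < n := by exact_mod_cast hn
    have hNR : (0:ℝ) < N := by exact_mod_cast hNpos
    have hkl : ∀ (k : Fin N) (l : Fin n), mutualInfo (jointProb ρ (B k)) l
        ≤ Real.logb 2 d - ∑ j, p j * shannon (prob1 (σ j l) (B k l)) := by
      intro k l
      rw [hρeq]
      exact mutualInfo_bound p σ hp0 hp1 hdens (B k) (fun l' => hB.1 k l') l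
    have hl : ∀ l : Fin n, (∑ k, mutualInfo (jointProb ρ (B k)) l)
        ≤ N * Real.logb 2 d - f := by
      intro l
      have hfl : ∀ j, f ≤ ∑ k, shannon (prob1 (σ j l) (B k l)) := fun j =>
        hf (fun k => B k l) (fun k => hB.1 k l) (fun k k' hkk' => hB.2 l k k' hkk')
          (σ j l) (hdens j l)
      calc (∑ k, mutualInfo (jointProb ρ (B k)) l)
          ≤ ∑ k : Fin N, (Real.logb 2 d - ∑ j, p j * shannon (prob1 (σ j l) (B k l))) :=
            Finset.sum_le_sum fun k _ => hkl k l
        _ = N * Real.logb 2 d - ∑ j, p j * (∑ k, shannon (prob1 (σ j l) (B k l))) := by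
            rw [Finset.sum_sub_distrib, Finset.sum_const, Finset.card_univ,
              Fintype.card_fin, nsmul_eq_mul, Finset.sum_comm]
            congr 1
            exact Finset.sum_congr rfl fun j _ => (Finset.mul_sum _ _ _).symm
        _ ≤ N * Real.logb 2 d - f := by
            have hfs : f ≤ ∑ j, p j * (∑ k, shannon (prob1 (σ j l) (B k l))) := by
              calc f = ∑ j, p j * f := by rw [← Finset.sum_mul, hp1, one_mul]
                _ ≤ _ := Finset.sum_le_sum fun j _ =>
                    mul_le_mul_of_nonneg_left (hfl j) (hp0 j)
            linarith
    have htot : (∑ k, ∑ l, mutualInfo (jointProb ρ (B k)) l)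
        ≤ n * (N * Real.logb 2 d - f) := by
      rw [Finset.sum_comm]
      calc (∑ l : Fin n, ∑ k, mutualInfo (jointProb ρ (B k)) l)
          ≤ ∑ _l : Fin n, (N * Real.logb 2 d - f) := Finset.sum_le_sum fun l _ => hl l
        _ = n * (N * Real.logb 2 d - f) := by
            rw [Finset.sum_const, Finset.card_univ, Fintype.card_fin, nsmul_eq_mul]
    rw [hxeq]
    unfold CNval
    have hpos : (0:ℝ) ≤ 1 / ((n:ℝ) * N) := by positivity
    calc (1 / ((n:ℝ) * N)) * ∑ k, ∑ l, mutualInfo (jointProb ρ (B k)) l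
        ≤ (1 / ((n:ℝ) * N)) * (n * (N * Real.logb 2 d - f)) :=
          mul_le_mul_of_nonneg_left htot hpos
      _ = Real.logb 2 d - f / N := by
          field_simp

end
end Paper
end

section
/- Let {𝒫_k}_{k=1}^N be POVMs on ℂ^d, each with d outcomes, and let F ∈ ℝ be such that ∑_{k=1}^N H(𝒫_k|σ) ≥ F for every density operator σ on ℂ^d, where H(𝒫|σ) is the Shannon entropy of the distribution (tr(P(i)σ))_i. For a density operator ρ on (ℂ^d)^{⊗n}, define C_N(ρ) = (1/(nN)) ∑_{k=1}^N ∑_{l=1}^n I_k^(l)(ρ), where I_k^(l)(ρ) is the mutual information between subsystem l and the remaining subsystems for the joint outcome distribution p(i_1,…,i_n) = tr((P_k(i_1)⊗⋯⊗P_k(i_n))ρ) obtained by measuring 𝒫_k on every subsystem. Then: (a) every fully separable density operator ρ on (ℂ^d)^{⊗n} satisfies C_N(ρ) ≤ log₂ d − F/N, and (b) every biseparable density operator ρ on (ℂ^d)^{⊗3} satisfies C_N(ρ) ≤ log₂ d − F/(3N). -/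
open scoped BigOperators ComplexOrder

namespace Paper

noncomputable section

/-- Restriction of a joint outcome to the subsystems other than `l`. -/
def restrictAt {n d : ℕ} (l : Fin n) (x : Idx n d) : {m : Fin n // m ≠ l} → Fin d :=
  fun m => x m.1

/-- The operator `A ⊗ T` placed so that `A` acts on subsystem `l` of three subsystems and
`T` on the remaining two. -/
def assembleAt {d : ℕ} (l : Fin 3) (A : Matrix (Fin d) (Fin d) ℂ)
    (T : Matrix ({m : Fin 3 // m ≠ l} → Fin d) ({m : Fin 3 // m ≠ l} → Fin d) ℂ) :
    Matrix (Idx 3 d) (Idx 3 d) ℂ :=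
  Matrix.of fun x y => A (x l) (y l) * T (restrictAt l x) (restrictAt l y)

/-- Biseparability of a tripartite density operator. -/
def Bisep3 {d : ℕ} (ρ : Matrix (Idx 3 d) (Idx 3 d) ℂ) : Prop :=
  ∃ (J : ℕ) (p : Fin J → Fin 3 → ℝ)
    (σ : Fin J → Fin 3 → Matrix (Fin d) (Fin d) ℂ)
    (τ : (j : Fin J) → (l : Fin 3) →
      Matrix ({m : Fin 3 // m ≠ l} → Fin d) ({m : Fin 3 // m ≠ l} → Fin d) ℂ),
    (∀ j l, 0 ≤ p j l) ∧ (∑ j, ∑ l, p j l) = 1 ∧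
    (∀ j l, IsDensityOp (σ j l)) ∧ (∀ j l, IsDensityOp (τ j l)) ∧
    ρ = ∑ j, ∑ l, p j l • assembleAt l (σ j l) (τ j l)

/-- Joint outcome distribution of measuring the `d`-outcome POVM `P` on every subsystem. -/
def povmJointProb {n d : ℕ} (ρ : Matrix (Idx n d) (Idx n d) ℂ)
    (P : Fin d → Matrix (Fin d) (Fin d) ℂ) (i : Idx n d) : ℝ :=
  (Matrix.trace (tensorN (fun l => P (i l)) * ρ)).re

/-- The correlation function `C_N` for measurements in the POVMs `P k`. -/
def povmCN {n d : ℕ} (N : ℕ) (ρ : Matrix (Idx n d) (Idx n d) ℂ)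
    (P : Fin N → Fin d → Matrix (Fin d) (Fin d) ℂ) : ℝ :=
  (1 / (n * N)) * ∑ k, ∑ l, mutualInfo (povmJointProb ρ (P k)) l


namespace Priv
open Matrix (conjTranspose)
open scoped Matrix

/-- Natural-log entropy. -/
def Hnat {α : Type*} [Fintype α] (p : α → ℝ) : ℝ := ∑ a, -(p a * Real.log (p a))

/-- Natural-log "negative conditional entropy" `-H(A|B)` of a joint weight `μ`. -/
def Dnat {α β : Type*} [Fintype α] [Fintype β] (μ : α → β → ℝ) : ℝ :=
  ∑ a, ∑ b, μ a b * (Real.log (μ a b) - Real.log (∑ a', μ a' b))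

lemma log_sum_ineq {γ : Type*} [Fintype γ] (x y : γ → ℝ) (hx : ∀ c, 0 ≤ x c)
    (hy : ∀ c, 0 ≤ y c) (hxy : ∀ c, y c = 0 → x c = 0) :
    (∑ c, x c) * (Real.log (∑ c, x c) - Real.log (∑ c, y c)) ≤
      ∑ c, x c * (Real.log (x c) - Real.log (y c)) := by
  classical
  set X := ∑ c, x c with hX
  set Y := ∑ c, y c with hY
  rcases eq_or_lt_of_le (Finset.sum_nonneg (fun c _ => hy c)) with h0 | hYpos
  · -- Y = 0, hence all y = 0, all x = 0
    have hy0 : ∀ c, y c = 0 := by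
      intro c
      have := (Finset.sum_eq_zero_iff_of_nonneg (fun c _ => hy c)).mp h0.symm
      exact this c (Finset.mem_univ c)
    have hx0 : ∀ c, x c = 0 := fun c => hxy c (hy0 c)
    have : X = 0 := by simp [hX, hx0]
    simp [this, hx0]
  · -- Y > 0
    have hJ := (Real.convexOn_mul_log).map_sum_le (t := Finset.univ)
      (w := fun c => y c / Y) (p := fun c => x c / y c)
      (fun c _ => div_nonneg (hy c) hYpos.le)
      (by rw [← Finset.sum_div]; exact div_self (show Y ≠ 0 from hYpos.ne'))
      (fun c _ => by
        have := div_nonneg (hx c) (hy c)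
        simpa using this)
    simp only [smul_eq_mul] at hJ
    have hwz : ∑ c, y c / Y * (x c / y c) = X / Y := by
      rw [hX, Finset.sum_div]
      refine Finset.sum_congr rfl (fun c _ => ?_)
      rcases eq_or_lt_of_le (hy c) with h | h
      · simp [← h, hxy c h.symm]
      · field_simp
    rw [hwz] at hJ
    have key : X * Real.log (X / Y) ≤ ∑ c, x c * Real.log (x c / y c) := by
      have h2 := hJ
      have h3 : ∑ c, (y c / Y) * (x c / y c * Real.log (x c / y c))
          = (∑ c, x c * Real.log (x c / y c)) / Y := by
        rw [Finset.sum_div]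
        refine Finset.sum_congr rfl (fun c _ => ?_)
        rcases eq_or_lt_of_le (hy c) with h | h
        · simp [← h, hxy c h.symm]
        · field_simp
      rw [h3] at h2
      calc X * Real.log (X / Y) = (X / Y * Real.log (X / Y)) * Y := by rw [mul_comm (X / Y), mul_assoc, div_mul_cancel₀ X (show Y ≠ 0 from hYpos.ne'), mul_comm]
        _ ≤ ((∑ c, x c * Real.log (x c / y c)) / Y) * Y := by
            exact mul_le_mul_of_nonneg_right h2 hYpos.le
        _ = ∑ c, x c * Real.log (x c / y c) := by
            rw [div_mul_cancel₀ _ (show Y ≠ 0 from hYpos.ne')]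
    -- now convert log of quotients to differences
    have hXnn : 0 ≤ X := Finset.sum_nonneg (fun c _ => hx c)
    have hL : X * (Real.log X - Real.log Y) = X * Real.log (X / Y) := by
      rcases eq_or_lt_of_le hXnn with h | h
      · simp [← h]
      · rw [Real.log_div h.ne' hYpos.ne']
    have hR : ∀ c, x c * Real.log (x c / y c) = x c * (Real.log (x c) - Real.log (y c)) := by
      intro c
      rcases eq_or_lt_of_le (hx c) with h | h
      · simp [← h]
      · have hyc : 0 < y c := by
          rcases eq_or_lt_of_le (hy c) with h' | h'
          · exact absurd (hxy c h'.symm) h.ne'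
          · exact h'
        rw [Real.log_div h.ne' hyc.ne']
    rw [hL]
    calc X * Real.log (X / Y) ≤ ∑ c, x c * Real.log (x c / y c) := key
      _ = ∑ c, x c * (Real.log (x c) - Real.log (y c)) :=
          Finset.sum_congr rfl (fun c _ => hR c)

lemma Dnat_eq {α β : Type*} [Fintype α] [Fintype β] (μ : α → β → ℝ) :
    Dnat μ = Hnat (fun b => ∑ a, μ a b) - ∑ a, ∑ b, -(μ a b * Real.log (μ a b)) := by
  unfold Dnat Hnat
  have h2 : ∑ a, ∑ b, μ a b * Real.log (∑ a', μ a' b)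
      = ∑ b, (∑ a, μ a b) * Real.log (∑ a', μ a' b) := by
    rw [Finset.sum_comm]
    exact Finset.sum_congr rfl fun b _ => (Finset.sum_mul _ _ _).symm
  simp_rw [mul_sub, Finset.sum_sub_distrib]
  rw [h2]
  simp only [Finset.sum_neg_distrib]
  ring

lemma Dnat_nonpos {α β : Type*} [Fintype α] [Fintype β] (μ : α → β → ℝ)
    (hμ : ∀ a b, 0 ≤ μ a b) : Dnat μ ≤ 0 := by
  refine Finset.sum_nonpos (fun a _ => Finset.sum_nonpos (fun b _ => ?_))
  rcases eq_or_lt_of_le (hμ a b) with h | h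
  · simp [← h]
  · have hB : μ a b ≤ ∑ a', μ a' b :=
      Finset.single_le_sum (fun a' _ => hμ a' b) (Finset.mem_univ a)
    have : Real.log (μ a b) ≤ Real.log (∑ a', μ a' b) := Real.log_le_log h hB
    nlinarith

lemma Dnat_mix {α β γ : Type*} [Fintype α] [Fintype β] [Fintype γ]
    (lam : γ → ℝ) (μ : γ → α → β → ℝ) (hlam : ∀ c, 0 ≤ lam c)
    (hμ : ∀ c a b, 0 ≤ μ c a b) :
    Dnat (fun a b => ∑ c, lam c * μ c a b) ≤ ∑ c, lam c * Dnat (μ c) := by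
  classical
  have hswap : ∑ c, lam c * Dnat (μ c)
      = ∑ a, ∑ b, ∑ c, lam c * (μ c a b * (Real.log (μ c a b) - Real.log (∑ a', μ c a' b))) := by
    unfold Dnat
    simp_rw [Finset.mul_sum]
    rw [Finset.sum_comm]
    exact Finset.sum_congr rfl fun a _ => Finset.sum_comm
  rw [hswap]
  unfold Dnat
  refine Finset.sum_le_sum (fun a _ => Finset.sum_le_sum (fun b _ => ?_))
  have key := log_sum_ineq (fun c => lam c * μ c a b)
      (fun c => lam c * ∑ a', μ c a' b)
      (fun c => mul_nonneg (hlam c) (hμ c a b))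
      (fun c => mul_nonneg (hlam c) (Finset.sum_nonneg fun a' _ => hμ c a' b))
      (fun c hc => by
        rcases mul_eq_zero.mp hc with h | h
        · simp [h]
        · have h0 := (Finset.sum_eq_zero_iff_of_nonneg (fun a' _ => hμ c a' b)).mp h
          simp [h0 a (Finset.mem_univ a)])
  have hYsum : ∑ a', ∑ c, lam c * μ c a' b = ∑ c, lam c * ∑ a', μ c a' b := by
    rw [Finset.sum_comm]
    exact Finset.sum_congr rfl (fun c _ => (Finset.mul_sum _ _ _).symm)
  rw [hYsum]
  refine le_trans key (Finset.sum_le_sum (fun c _ => ?_))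
  rcases eq_or_lt_of_le (hlam c) with h | h
  · simp [← h]
  · rcases eq_or_lt_of_le (hμ c a b) with h2 | h2
    · simp [← h2]
    · have hBpos : 0 < ∑ a', μ c a' b :=
        lt_of_lt_of_le h2 (Finset.single_le_sum (fun a' _ => hμ c a' b) (Finset.mem_univ a))
      rw [Real.log_mul h.ne' h2.ne', Real.log_mul h.ne' hBpos.ne']
      exact le_of_eq (by ring)

lemma Dnat_prod {α β : Type*} [Fintype α] [Fintype β] (r : α → ℝ) (s : β → ℝ)
    (hr : ∀ a, 0 ≤ r a) (hs : ∀ b, 0 ≤ s b) (hr1 : ∑ a, r a = 1) (hs1 : ∑ b, s b = 1) :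
    Dnat (fun a b => r a * s b) = -Hnat r := by
  unfold Dnat Hnat
  have : ∀ a b, r a * s b * (Real.log (r a * s b) - Real.log (∑ a', r a' * s b))
      = (r a * Real.log (r a)) * s b := by
    intro a b
    have hsum : ∑ a', r a' * s b = s b := by
      rw [← Finset.sum_mul, hr1, one_mul]
    rw [hsum]
    rcases eq_or_lt_of_le (hr a) with h | h
    · simp [← h]
    · rcases eq_or_lt_of_le (hs b) with h2 | h2
      · simp [← h2]
      · rw [Real.log_mul h.ne' h2.ne']
        ring
  simp_rw [this]
  have : ∑ a, ∑ b, r a * Real.log (r a) * s b = ∑ a, r a * Real.log (r a) := by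
    refine Finset.sum_congr rfl (fun a _ => ?_)
    rw [← Finset.mul_sum, hs1, mul_one]
  rw [this, ← Finset.sum_neg_distrib]
  exact Finset.sum_congr rfl (fun a _ => by ring)

lemma Hnat_le_log_card {α : Type*} [Fintype α] (q : α → ℝ) (hq : ∀ a, 0 ≤ q a)
    (hq1 : ∑ a, q a = 1) : Hnat q ≤ Real.log (Fintype.card α) := by
  have key := log_sum_ineq q (fun _ => (1 : ℝ)) hq (fun _ => zero_le_one)
      (fun c hc => absurd hc one_ne_zero)
  simp only [hq1, Real.log_one, sub_zero, zero_sub, one_mul] at key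
  have hcard : ∑ _c : α, (1 : ℝ) = (Fintype.card α : ℝ) := by simp
  rw [hcard] at key
  have hH : Hnat q = -∑ a, q a * Real.log (q a) := by
    unfold Hnat; rw [Finset.sum_neg_distrib]
  rw [hH]
  linarith


/-! ### Combinatorics of `insertAt` -/

lemma insertAt_same {n d : ℕ} (l : Fin n) (i : Fin d) (g : {m : Fin n // m ≠ l} → Fin d) :
    insertAt l i g l = i := dif_pos rfl

lemma restrictAt_insertAt {n d : ℕ} (l : Fin n) (i : Fin d) (g : {m : Fin n // m ≠ l} → Fin d) :
    restrictAt l (insertAt l i g) = g := by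
  funext m
  have : insertAt l i g m.1 = g m := by
    unfold insertAt
    rw [dif_neg m.2]
  simpa [restrictAt] using this

lemma insertAt_apply_ne {n d : ℕ} (l : Fin n) (i : Fin d) (g : {m : Fin n // m ≠ l} → Fin d)
    (m : {m : Fin n // m ≠ l}) : insertAt l i g m.1 = g m := by
  unfold insertAt
  rw [dif_neg m.2]

lemma insertAt_restrictAt {n d : ℕ} (l : Fin n) (x : Idx n d) :
    insertAt l (x l) (restrictAt l x) = x := by
  funext m
  unfold insertAt restrictAt
  split
  · rename_i h; rw [h]
  · rfl

def splitEquiv {n d : ℕ} (l : Fin n) : (Fin d × ({m : Fin n // m ≠ l} → Fin d)) ≃ Idx n d where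
  toFun ig := insertAt l ig.1 ig.2
  invFun x := (x l, restrictAt l x)
  left_inv ig := by
    show (insertAt l ig.1 ig.2 l, restrictAt l (insertAt l ig.1 ig.2)) = ig
    rw [insertAt_same, restrictAt_insertAt]
  right_inv x := insertAt_restrictAt l x

lemma sum_split {M : Type*} [AddCommMonoid M] {n d : ℕ} (l : Fin n) (f : Idx n d → M) :
    ∑ x, f x = ∑ i : Fin d, ∑ g : {m : Fin n // m ≠ l} → Fin d, f (insertAt l i g) := by
  rw [← Equiv.sum_comp (splitEquiv l) f, Fintype.sum_prod_type]
  rfl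

lemma prod_split {M : Type*} [CommMonoid M] {n : ℕ} (l : Fin n) (f : Fin n → M) :
    ∏ m, f m = f l * ∏ m : {m : Fin n // m ≠ l}, f m.1 := by
  classical
  rw [Fintype.prod_eq_mul_prod_compl l]
  congr 1
  rw [← Finset.prod_subtype ({l}ᶜ : Finset (Fin n)) (fun x => by simp) f]

/-! ### `shannon`, `margAt`, `mutualInfo` via `Hnat`/`Dnat` -/

lemma shannon_eq_Hnat {α : Type*} [Fintype α] (p : α → ℝ) :
    shannon p = Hnat p / Real.log 2 := by
  unfold shannon Hnat Real.logb
  rw [Finset.sum_div]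
  refine Finset.sum_congr rfl (fun a _ => ?_)
  ring

lemma margAt_eq {n d : ℕ} (p : Idx n d → ℝ) (l : Fin n) (i : Fin d) :
    margAt p l i = ∑ g : {m : Fin n // m ≠ l} → Fin d, p (insertAt l i g) := by
  unfold margAt
  rw [sum_split l]
  rw [Finset.sum_eq_single i]
  · refine Finset.sum_congr rfl (fun g _ => ?_)
    rw [if_pos (insertAt_same l i g)]
  · intro j _ hj
    refine Finset.sum_eq_zero (fun g _ => ?_)
    rw [if_neg]
    rw [insertAt_same]
    exact hj
  · intro h
    exact absurd (Finset.mem_univ i) h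

lemma mutualInfo_eq {n d : ℕ} (p : Idx n d → ℝ) (l : Fin n) :
    mutualInfo p l
      = (Hnat (margAt p l) + Dnat (fun i g => p (insertAt l i g))) / Real.log 2 := by
  unfold mutualInfo
  rw [shannon_eq_Hnat, shannon_eq_Hnat, shannon_eq_Hnat]
  rw [Dnat_eq]
  have hB : Hnat (margRest p l)
      = Hnat (fun g => ∑ i, (fun i g => p (insertAt l i g)) i g) := by
    unfold Hnat margRest
    rfl
  have hJ : Hnat p = ∑ i : Fin d, ∑ g : {m : Fin n // m ≠ l} → Fin d,
      -((fun i g => p (insertAt l i g)) i g * Real.log ((fun i g => p (insertAt l i g)) i g)) := by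
    unfold Hnat
    rw [sum_split l]
  rw [hB, hJ]
  ring

/-- The main abstract bound for the mutual information of a mixture. -/
lemma mutualInfo_le_of_mix {n d : ℕ} {γ : Type*} [Fintype γ] (l : Fin n)
    (p : Idx n d → ℝ) (lam : γ → ℝ) (μ : γ → Idx n d → ℝ) (E : γ → ℝ)
    (hlam : ∀ c, 0 ≤ lam c) (hμ : ∀ c x, 0 ≤ μ c x)
    (hp : ∀ x, p x = ∑ c, lam c * μ c x) (hp1 : ∑ x, p x = 1)
    (hE : ∀ c, Dnat (fun i g => μ c (insertAt l i g)) ≤ -Real.log 2 * E c) :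
    mutualInfo p l ≤ Real.logb 2 d - ∑ c, lam c * E c := by
  have hlog2 : (0:ℝ) < Real.log 2 := Real.log_pos (by norm_num)
  rw [mutualInfo_eq]
  have hpnn : ∀ x, 0 ≤ p x := fun x => by
    rw [hp x]
    exact Finset.sum_nonneg (fun c _ => mul_nonneg (hlam c) (hμ c x))
  -- bound on the marginal entropy
  have hA : Hnat (margAt p l) ≤ Real.log d := by
    have h1 : ∑ i, margAt p l i = 1 := by
      rw [← hp1, sum_split l]
      exact Finset.sum_congr rfl (fun i _ => (margAt_eq p l i))
    have := Hnat_le_log_card (margAt p l)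
      (fun i => by
        rw [margAt_eq]
        exact Finset.sum_nonneg (fun g _ => hpnn _)) h1
    simpa using this
  -- bound on Dnat
  have hD : Dnat (fun i g => p (insertAt l i g)) ≤ -Real.log 2 * ∑ c, lam c * E c := by
    have heq : (fun (i : Fin d) (g : {m : Fin n // m ≠ l} → Fin d) => p (insertAt l i g))
        = fun i g => ∑ c, lam c * μ c (insertAt l i g) := by
      funext i g
      exact hp _
    rw [heq]
    refine le_trans (Dnat_mix lam (fun c i g => μ c (insertAt l i g)) hlam
      (fun c i g => hμ c _)) ?_
    rw [Finset.mul_sum]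
    refine Finset.sum_le_sum (fun c _ => ?_)
    calc lam c * Dnat (fun i g => μ c (insertAt l i g))
        ≤ lam c * (-Real.log 2 * E c) := mul_le_mul_of_nonneg_left (hE c) (hlam c)
      _ = -Real.log 2 * (lam c * E c) := by ring
  have : Hnat (margAt p l) + Dnat (fun i g => p (insertAt l i g))
      ≤ Real.log d + -Real.log 2 * ∑ c, lam c * E c := add_le_add hA hD
  calc (Hnat (margAt p l) + Dnat (fun i g => p (insertAt l i g))) / Real.log 2
      ≤ (Real.log d + -Real.log 2 * ∑ c, lam c * E c) / Real.log 2 := by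
        exact (div_le_div_iff_of_pos_right hlog2).mpr this
    _ = Real.logb 2 d - ∑ c, lam c * E c := by
        unfold Real.logb
        field_simp
        ring


lemma sum_fun_prod {R : Type*} [CommSemiring R] {ι : Type*} [Fintype ι] [DecidableEq ι]
    {d : ℕ} (F : ι → Fin d → R) :
    ∑ x : ι → Fin d, ∏ m, F m (x m) = ∏ m, ∑ j, F m j := by
  rw [Finset.prod_univ_sum, Fintype.piFinset_univ]

/-! ### Tensor products -/

/-- Tensor product over an arbitrary finite index type. -/
def tens {ι : Type*} [Fintype ι] {d : ℕ} (A : ι → Matrix (Fin d) (Fin d) ℂ) :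
    Matrix (ι → Fin d) (ι → Fin d) ℂ :=
  Matrix.of fun x y => ∏ m, A m (x m) (y m)

lemma tensorN_eq_tens {n d : ℕ} (A : Fin n → Matrix (Fin d) (Fin d) ℂ) :
    tensorN A = tens A := rfl

lemma tens_mul {ι : Type*} [Fintype ι] [DecidableEq ι] {d : ℕ}
    (A B : ι → Matrix (Fin d) (Fin d) ℂ) :
    tens A * tens B = tens (fun m => A m * B m) := by
  ext x z
  simp only [tens, Matrix.mul_apply, Matrix.of_apply]
  rw [← sum_fun_prod (fun m j => A m (x m) j * B m j (z m))]
  exact Finset.sum_congr rfl fun y _ => Finset.prod_mul_distrib.symm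

lemma tens_conjTranspose {ι : Type*} [Fintype ι] {d : ℕ}
    (A : ι → Matrix (Fin d) (Fin d) ℂ) :
    (tens A)ᴴ = tens (fun m => (A m)ᴴ) := by
  ext x y
  simp only [tens, Matrix.conjTranspose_apply, Matrix.of_apply, star_prod]

lemma posSemidef_iff_eq_transpose_mul_self {α : Type*} [Fintype α] [DecidableEq α]
    {A : Matrix α α ℂ} : A.PosSemidef ↔ ∃ B : Matrix α α ℂ, A = Bᴴ * B := by
  open scoped MatrixOrder in
  constructor
  · intro hA
    obtain ⟨B, hB⟩ := CStarAlgebra.nonneg_iff_eq_star_mul_self.mp hA.nonneg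
    exact ⟨B, hB⟩
  · rintro ⟨B, rfl⟩
    exact Matrix.posSemidef_conjTranspose_mul_self B

lemma tens_posSemidef {ι : Type*} [Fintype ι] [DecidableEq ι] {d : ℕ}
    {A : ι → Matrix (Fin d) (Fin d) ℂ} (hA : ∀ m, (A m).PosSemidef) :
    (tens A).PosSemidef := by
  choose B hB using fun m => posSemidef_iff_eq_transpose_mul_self.mp (hA m)
  have hAB : A = fun m => (B m)ᴴ * B m := funext hB
  have : tens A = (tens B)ᴴ * tens B := by
    rw [tens_conjTranspose, tens_mul, hAB]
  rw [this]
  exact Matrix.posSemidef_conjTranspose_mul_self _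

lemma trace_tens {ι : Type*} [Fintype ι] [DecidableEq ι] {d : ℕ}
    (A : ι → Matrix (Fin d) (Fin d) ℂ) :
    Matrix.trace (tens A) = ∏ m, Matrix.trace (A m) := by
  simp only [Matrix.trace, Matrix.diag, tens, Matrix.of_apply]
  exact sum_fun_prod (fun m j => A m j j)

lemma sum_tens {ι : Type*} [Fintype ι] [DecidableEq ι] {d : ℕ}
    (P : Fin d → Matrix (Fin d) (Fin d) ℂ) (hP : (∑ i, P i) = 1) :
    ∑ f : ι → Fin d, tens (fun m => P (f m)) = 1 := by
  ext x y
  rw [Matrix.sum_apply]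
  simp only [tens, Matrix.of_apply]
  rw [sum_fun_prod (fun m j => P j (x m) (y m))]
  have h1 : ∀ m : ι, ∑ j : Fin d, P j (x m) (y m) = (1 : Matrix (Fin d) (Fin d) ℂ) (x m) (y m) := by
    intro m
    rw [← Matrix.sum_apply (x m) (y m) Finset.univ P, hP]
  simp only [h1, Matrix.one_apply]
  by_cases h : x = y
  · subst h; simp
  · rw [if_neg h]
    obtain ⟨m, hm⟩ : ∃ m, x m ≠ y m := by
      by_contra hc
      push_neg at hc
      exact h (funext hc)
    exact Finset.prod_eq_zero (Finset.mem_univ m) (by rw [if_neg hm])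

lemma trace_mul_psd_re {α : Type*} [Fintype α] [DecidableEq α] {A B : Matrix α α ℂ}
    (hA : A.PosSemidef) (hB : B.PosSemidef) :
    0 ≤ (Matrix.trace (A * B)).re ∧
      Matrix.trace (A * B) = (((Matrix.trace (A * B)).re : ℝ) : ℂ) := by
  obtain ⟨C, rfl⟩ := posSemidef_iff_eq_transpose_mul_self.mp hA
  obtain ⟨D, rfl⟩ := posSemidef_iff_eq_transpose_mul_self.mp hB
  have key : Matrix.trace (Cᴴ * C * (Dᴴ * D)) = Matrix.trace ((C * Dᴴ)ᴴ * (C * Dᴴ)) := by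
    have e1 : (C * Dᴴ)ᴴ * (C * Dᴴ) = D * (Cᴴ * C * Dᴴ) := by
      simp only [Matrix.conjTranspose_mul, Matrix.conjTranspose_conjTranspose, Matrix.mul_assoc]
    rw [e1, Matrix.trace_mul_comm D (Cᴴ * C * Dᴴ)]
    simp only [Matrix.mul_assoc]
  have hval : Matrix.trace ((C * Dᴴ)ᴴ * (C * Dᴴ))
      = ((∑ i, ∑ j, Complex.normSq ((C * Dᴴ) j i) : ℝ) : ℂ) := by
    simp only [Matrix.trace, Matrix.diag, Matrix.mul_apply, Matrix.conjTranspose_apply]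
    push_cast
    refine Finset.sum_congr rfl fun i _ => Finset.sum_congr rfl fun j _ => ?_
    rw [mul_comm, Complex.star_def, Complex.mul_conj]
  rw [key, hval]
  constructor
  · simp only [Complex.ofReal_re]
    exact Finset.sum_nonneg fun i _ => Finset.sum_nonneg fun j _ => Complex.normSq_nonneg _
  · simp

/-! ### POVM joint probabilities -/

lemma povmJointProb_nonneg {n d : ℕ} {ρ : Matrix (Idx n d) (Idx n d) ℂ}
    (hρ : ρ.PosSemidef) {P : Fin d → Matrix (Fin d) (Fin d) ℂ}
    (hP : ∀ i, (P i).PosSemidef) (i : Idx n d) : 0 ≤ povmJointProb ρ P i := by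
  unfold povmJointProb
  rw [tensorN_eq_tens]
  exact (trace_mul_psd_re (tens_posSemidef (fun m => hP _)) hρ).1

lemma povmJointProb_sum_one {n d : ℕ} {ρ : Matrix (Idx n d) (Idx n d) ℂ}
    (hρ : ρ.trace = 1) {P : Fin d → Matrix (Fin d) (Fin d) ℂ}
    (hP : (∑ i, P i) = 1) : ∑ i, povmJointProb ρ P i = 1 := by
  unfold povmJointProb
  rw [← Complex.re_sum]
  have : ∑ i : Idx n d, Matrix.trace (tensorN (fun l => P (i l)) * ρ) = 1 := by
    rw [← Matrix.trace_sum, ← Finset.sum_mul]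
    simp only [tensorN_eq_tens]
    rw [sum_tens P hP, Matrix.one_mul, hρ]
  rw [this]
  simp

lemma povmJointProb_mix {n d : ℕ} {γ : Type*} [Fintype γ] (c : γ → ℝ)
    (ρs : γ → Matrix (Idx n d) (Idx n d) ℂ) (P : Fin d → Matrix (Fin d) (Fin d) ℂ)
    (i : Idx n d) :
    povmJointProb (∑ j, c j • ρs j) P i = ∑ j, c j * povmJointProb (ρs j) P i := by
  unfold povmJointProb
  rw [Matrix.mul_sum, Matrix.trace_sum, Complex.re_sum]
  refine Finset.sum_congr rfl fun j _ => ?_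
  rw [Matrix.mul_smul, Matrix.trace_smul]
  simp [Complex.real_smul]

lemma povmJointProb_tensor {n d : ℕ} (σ : Fin n → Matrix (Fin d) (Fin d) ℂ)
    (hσ : ∀ l, (σ l).PosSemidef) (P : Fin d → Matrix (Fin d) (Fin d) ℂ)
    (hP : ∀ i, (P i).PosSemidef) (i : Idx n d) :
    povmJointProb (tensorN σ) P i = ∏ l, (Matrix.trace (P (i l) * σ l)).re := by
  unfold povmJointProb
  rw [tensorN_eq_tens, tensorN_eq_tens, tens_mul, trace_tens]
  have hreal : ∀ l, Matrix.trace (P (i l) * σ l)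
      = (((Matrix.trace (P (i l) * σ l)).re : ℝ) : ℂ) := fun l => (trace_mul_psd_re (hP _) (hσ l)).2
  have : ∏ l, Matrix.trace (P (i l) * σ l)
      = ((∏ l, (Matrix.trace (P (i l) * σ l)).re : ℝ) : ℂ) := by
    rw [Complex.ofReal_prod]
    exact Finset.prod_congr rfl fun l _ => hreal l
  rw [this, Complex.ofReal_re]

lemma tens_povm_sum_one {ι : Type*} [Fintype ι] [DecidableEq ι] {d : ℕ}
    (P : Fin d → Matrix (Fin d) (Fin d) ℂ) (hP1 : (∑ i, P i) = 1)
    {τ : Matrix (ι → Fin d) (ι → Fin d) ℂ} (hτ : τ.trace = 1) :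
    ∑ g : ι → Fin d, (Matrix.trace (tens (fun m => P (g m)) * τ)).re = 1 := by
  rw [← Complex.re_sum, ← Matrix.trace_sum, ← Finset.sum_mul, sum_tens P hP1, Matrix.one_mul, hτ]
  simp

lemma povm_single_sum {d : ℕ} (P : Fin d → Matrix (Fin d) (Fin d) ℂ)
    (hP1 : (∑ i, P i) = 1) {σ : Matrix (Fin d) (Fin d) ℂ} (hσtr : σ.trace = 1) :
    ∑ i, (Matrix.trace (P i * σ)).re = 1 := by
  rw [← Complex.re_sum, ← Matrix.trace_sum, ← Finset.sum_mul, hP1, Matrix.one_mul, hσtr]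
  simp

lemma Hnat_eq_log2_shannon {α : Type*} [Fintype α] (p : α → ℝ) :
    Hnat p = Real.log 2 * shannon p := by
  rw [shannon_eq_Hnat]
  field_simp

/-! ### `assembleAt` -/

lemma assembleAt_mul {d : ℕ} (l : Fin 3) (A B : Matrix (Fin d) (Fin d) ℂ)
    (T S : Matrix ({m : Fin 3 // m ≠ l} → Fin d) ({m : Fin 3 // m ≠ l} → Fin d) ℂ) :
    assembleAt l A T * assembleAt l B S = assembleAt l (A * B) (T * S) := by
  ext x z
  simp only [assembleAt, Matrix.mul_apply, Matrix.of_apply]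
  rw [sum_split l (f := fun y => A (x l) (y l) * T (restrictAt l x) (restrictAt l y) *
    (B (y l) (z l) * S (restrictAt l y) (restrictAt l z)))]
  simp only [insertAt_same, restrictAt_insertAt]
  rw [Finset.sum_mul_sum]
  exact Finset.sum_congr rfl fun i _ => Finset.sum_congr rfl fun g _ => by ring

lemma assembleAt_conjTranspose {d : ℕ} (l : Fin 3) (A : Matrix (Fin d) (Fin d) ℂ)
    (T : Matrix ({m : Fin 3 // m ≠ l} → Fin d) ({m : Fin 3 // m ≠ l} → Fin d) ℂ) :
    (assembleAt l A T)ᴴ = assembleAt l Aᴴ Tᴴ := by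
  ext x y
  simp [assembleAt, Matrix.conjTranspose_apply, star_mul']

lemma assembleAt_posSemidef {d : ℕ} (l : Fin 3) {A : Matrix (Fin d) (Fin d) ℂ}
    {T : Matrix ({m : Fin 3 // m ≠ l} → Fin d) ({m : Fin 3 // m ≠ l} → Fin d) ℂ}
    (hA : A.PosSemidef) (hT : T.PosSemidef) : (assembleAt l A T).PosSemidef := by
  obtain ⟨C, rfl⟩ := posSemidef_iff_eq_transpose_mul_self.mp hA
  obtain ⟨S, rfl⟩ := posSemidef_iff_eq_transpose_mul_self.mp hT
  have : (assembleAt l C S)ᴴ * assembleAt l C S = assembleAt l (Cᴴ * C) (Sᴴ * S) := by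
    rw [assembleAt_conjTranspose, assembleAt_mul]
  rw [← this]
  exact Matrix.posSemidef_conjTranspose_mul_self _

lemma trace_assembleAt {d : ℕ} (l : Fin 3) (A : Matrix (Fin d) (Fin d) ℂ)
    (T : Matrix ({m : Fin 3 // m ≠ l} → Fin d) ({m : Fin 3 // m ≠ l} → Fin d) ℂ) :
    (assembleAt l A T).trace = A.trace * T.trace := by
  simp only [Matrix.trace, Matrix.diag, assembleAt, Matrix.of_apply]
  rw [sum_split l (f := fun x => A (x l) (x l) * T (restrictAt l x) (restrictAt l x))]
  simp only [insertAt_same, restrictAt_insertAt]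
  rw [Finset.sum_mul_sum]

lemma tensorN_split {d : ℕ} (l : Fin 3) (A : Fin 3 → Matrix (Fin d) (Fin d) ℂ) :
    tensorN A = assembleAt l (A l) (tens fun m : {m : Fin 3 // m ≠ l} => A m.1) := by
  ext x y
  show ∏ m, A m (x m) (y m) = _
  rw [prod_split l (f := fun m => A m (x m) (y m))]
  rfl

lemma povmJointProb_assemble {d : ℕ} (l : Fin 3) {σ : Matrix (Fin d) (Fin d) ℂ}
    {τ : Matrix ({m : Fin 3 // m ≠ l} → Fin d) ({m : Fin 3 // m ≠ l} → Fin d) ℂ}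
    (hσ : σ.PosSemidef) (hτ : τ.PosSemidef)
    (P : Fin d → Matrix (Fin d) (Fin d) ℂ) (hP : ∀ i, (P i).PosSemidef) (i : Idx 3 d) :
    povmJointProb (assembleAt l σ τ) P i
      = (Matrix.trace (P (i l) * σ)).re *
        (Matrix.trace (tens (fun m : {m : Fin 3 // m ≠ l} => P (i m.1)) * τ)).re := by
  unfold povmJointProb
  rw [tensorN_split l (fun m => P (i m)), assembleAt_mul, trace_assembleAt]
  rw [(trace_mul_psd_re (hP (i l)) hσ).2,
    (trace_mul_psd_re (tens_posSemidef (fun m => hP (i m.1))) hτ).2]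
  rw [← Complex.ofReal_mul, Complex.ofReal_re]
  simp

/-! ### Per-site bounds -/

lemma mutualInfo_sep_le {n d : ℕ} (Pk : Fin d → Matrix (Fin d) (Fin d) ℂ)
    (hPk : ∀ i, (Pk i).PosSemidef) (hPk1 : (∑ i, Pk i) = 1)
    {J : ℕ} (p : Fin J → ℝ) (σ : Fin J → Fin n → Matrix (Fin d) (Fin d) ℂ)
    (hp : ∀ j, 0 ≤ p j) (hσ : ∀ j m, IsDensityOp (σ j m))
    {ρ : Matrix (Idx n d) (Idx n d) ℂ} (hρ : ρ = ∑ j, p j • tensorN (σ j))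
    (hρtr : ρ.trace = 1) (l : Fin n) :
    mutualInfo (povmJointProb ρ Pk) l
      ≤ Real.logb 2 d
        - ∑ j, p j * shannon (fun i => (Matrix.trace (Pk i * σ j l)).re) := by
  refine mutualInfo_le_of_mix l (povmJointProb ρ Pk) p
      (fun j => povmJointProb (tensorN (σ j)) Pk)
      (fun j => shannon (fun i => (Matrix.trace (Pk i * σ j l)).re))
      hp ?_ ?_ ?_ ?_
  · intro j x
    have : (tensorN (σ j)).PosSemidef := by
      rw [tensorN_eq_tens]
      exact tens_posSemidef (fun m => (hσ j m).1)
    exact povmJointProb_nonneg this hPk x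
  · intro x
    rw [hρ]
    exact povmJointProb_mix p (fun j => tensorN (σ j)) Pk x
  · exact povmJointProb_sum_one hρtr hPk1
  · intro j
    set r : Fin d → ℝ := fun i => (Matrix.trace (Pk i * σ j l)).re with hr
    set ss : ({m : Fin n // m ≠ l} → Fin d) → ℝ :=
      fun g => ∏ m : {m : Fin n // m ≠ l}, (Matrix.trace (Pk (g m) * σ j m.1)).re with hss
    have hfac : (fun (i : Fin d) (g : {m : Fin n // m ≠ l} → Fin d) =>
        povmJointProb (tensorN (σ j)) Pk (insertAt l i g)) = fun i g => r i * ss g := by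
      funext i g
      rw [povmJointProb_tensor _ (fun m => (hσ j m).1) _ hPk]
      rw [prod_split l (f := fun m => (Matrix.trace (Pk (insertAt l i g m) * σ j m)).re)]
      rw [insertAt_same]
      congr 1
      exact Finset.prod_congr rfl fun m _ => by rw [insertAt_apply_ne]
    rw [hfac]
    have hrnn : ∀ i, 0 ≤ r i := fun i => (trace_mul_psd_re (hPk i) (hσ j l).1).1
    have hssnn : ∀ g, 0 ≤ ss g :=
      fun g => Finset.prod_nonneg fun m _ => (trace_mul_psd_re (hPk _) (hσ j m.1).1).1
    have hr1 : ∑ i, r i = 1 := povm_single_sum Pk hPk1 (hσ j l).2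
    have hss1 : ∑ g, ss g = 1 := by
      rw [hss]
      rw [sum_fun_prod (fun (m : {m : Fin n // m ≠ l}) i => (Matrix.trace (Pk i * σ j m.1)).re)]
      exact Finset.prod_eq_one fun m _ => povm_single_sum Pk hPk1 (hσ j m.1).2
    rw [Dnat_prod r ss hrnn hssnn hr1 hss1, Hnat_eq_log2_shannon]
    rw [hr]
    exact le_of_eq (by ring)

lemma mutualInfo_bisep_le {d : ℕ} (Pk : Fin d → Matrix (Fin d) (Fin d) ℂ)
    (hPk : ∀ i, (Pk i).PosSemidef) (hPk1 : (∑ i, Pk i) = 1)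
    {J : ℕ} (p : Fin J → Fin 3 → ℝ)
    (σ : Fin J → Fin 3 → Matrix (Fin d) (Fin d) ℂ)
    (τ : (j : Fin J) → (l : Fin 3) →
      Matrix ({m : Fin 3 // m ≠ l} → Fin d) ({m : Fin 3 // m ≠ l} → Fin d) ℂ)
    (hp : ∀ j l, 0 ≤ p j l) (hσ : ∀ j l, IsDensityOp (σ j l))
    (hτ : ∀ j l, IsDensityOp (τ j l))
    {ρ : Matrix (Idx 3 d) (Idx 3 d) ℂ}
    (hρ : ρ = ∑ j, ∑ l, p j l • assembleAt l (σ j l) (τ j l))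
    (hρtr : ρ.trace = 1) (m : Fin 3) :
    mutualInfo (povmJointProb ρ Pk) m
      ≤ Real.logb 2 d
        - ∑ j, p j m * shannon (fun i => (Matrix.trace (Pk i * σ j m)).re) := by
  classical
  have hmain := mutualInfo_le_of_mix (γ := Fin J × Fin 3) m (povmJointProb ρ Pk)
      (fun c => p c.1 c.2)
      (fun c => povmJointProb (assembleAt c.2 (σ c.1 c.2) (τ c.1 c.2)) Pk)
      (fun c => if c.2 = m then shannon (fun i => (Matrix.trace (Pk i * σ c.1 m)).re) else 0)
      (fun c => hp c.1 c.2)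
      (fun c x => povmJointProb_nonneg
        (assembleAt_posSemidef c.2 (hσ c.1 c.2).1 (hτ c.1 c.2).1) hPk x)
      (fun x => by
        rw [hρ]
        have : (∑ j, ∑ l, p j l • assembleAt l (σ j l) (τ j l))
            = ∑ c : Fin J × Fin 3, p c.1 c.2 • assembleAt c.2 (σ c.1 c.2) (τ c.1 c.2) := by
          rw [Fintype.sum_prod_type]
        rw [this]
        exact povmJointProb_mix _ _ Pk x)
      (povmJointProb_sum_one hρtr hPk1)
      (fun c => ?_)
  · refine le_trans hmain ?_
    have : ∑ c : Fin J × Fin 3, p c.1 c.2 *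
        (if c.2 = m then shannon (fun i => (Matrix.trace (Pk i * σ c.1 m)).re) else 0)
        = ∑ j, p j m * shannon (fun i => (Matrix.trace (Pk i * σ j m)).re) := by
      rw [Fintype.sum_prod_type]
      refine Finset.sum_congr rfl fun j _ => ?_
      rw [Finset.sum_eq_single m]
      · rw [if_pos rfl]
      · intro l _ hl
        rw [if_neg hl, mul_zero]
      · intro h
        exact absurd (Finset.mem_univ m) h
    rw [this]
  · -- the entropy estimate for each component
    obtain ⟨j, l⟩ := c
    simp only
    rcases eq_or_ne l m with rfl | hc
    · rw [if_pos rfl]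
      set r : Fin d → ℝ := fun i => (Matrix.trace (Pk i * σ j l)).re with hrdef
      set ss : ({m' : Fin 3 // m' ≠ l} → Fin d) → ℝ :=
        fun g => (Matrix.trace (tens (fun m' : {m' : Fin 3 // m' ≠ l} => Pk (g m')) * τ j l)).re
        with hssdef
      have hfac : (fun (i : Fin d) (g : {m' : Fin 3 // m' ≠ l} → Fin d) =>
          povmJointProb (assembleAt l (σ j l) (τ j l)) Pk (insertAt l i g))
          = fun i g => r i * ss g := by
        funext i g
        rw [povmJointProb_assemble l (hσ j l).1 (hτ j l).1 Pk hPk]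
        rw [insertAt_same]
        have hfun : (fun m' : {m' : Fin 3 // m' ≠ l} => Pk (insertAt l i g m'.1))
            = fun m' => Pk (g m') := funext fun m' => by rw [insertAt_apply_ne]
        rw [hfun]
      rw [hfac]
      have hrnn : ∀ i, 0 ≤ r i := fun i => (trace_mul_psd_re (hPk i) (hσ j l).1).1
      have hssnn : ∀ g, 0 ≤ ss g := fun g =>
        (trace_mul_psd_re (tens_posSemidef (fun m' => hPk (g m'))) (hτ j l).1).1
      have hr1 : ∑ i, r i = 1 := povm_single_sum Pk hPk1 (hσ j l).2
      have hss1 : ∑ g, ss g = 1 := tens_povm_sum_one Pk hPk1 (hτ j l).2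
      rw [Dnat_prod r ss hrnn hssnn hr1 hss1, Hnat_eq_log2_shannon]
      exact le_of_eq (by ring)
    · rw [if_neg hc, mul_zero]
      exact Dnat_nonpos _ (fun i g => povmJointProb_nonneg
        (assembleAt_posSemidef l (hσ j l).1 (hτ j l).1) hPk _)

end Priv

/-- Generalization to mutually unbiased measurements: given `N` POVMs on `ℂ^d` obeying an
entropic uncertainty bound `F`, every fully separable state satisfies
`C_N ≤ log₂ d − F/N` and every biseparable tripartite state satisfies
`C_N ≤ log₂ d − F/(3N)`. -/
theorem povm_correlation_bounds (d N : ℕ) (hd : 2 ≤ d)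
    (P : Fin N → Fin d → Matrix (Fin d) (Fin d) ℂ)
    (hP : ∀ k, (∀ i, (P k i).PosSemidef) ∧ (∑ i, P k i) = 1)
    (F : ℝ)
    (hF : ∀ σ : Matrix (Fin d) (Fin d) ℂ, IsDensityOp σ →
      F ≤ ∑ k, shannon (fun i => (Matrix.trace (P k i * σ)).re)) :
    (∀ n : ℕ, 0 < n → ∀ ρ : Matrix (Idx n d) (Idx n d) ℂ, IsDensityOp ρ → FullySep ρ →
      povmCN N ρ P ≤ Real.logb 2 d - F / N) ∧
    (∀ ρ : Matrix (Idx 3 d) (Idx 3 d) ℂ, IsDensityOp ρ → Bisep3 ρ →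
      povmCN N ρ P ≤ Real.logb 2 d - F / (3 * N)) := by
  classical
  have hlog2pos : (0:ℝ) < Real.log 2 := Real.log_pos (by norm_num)
  have hlogb1 : (1:ℝ) ≤ Real.logb 2 d := by
    rw [Real.logb, le_div_iff₀ hlog2pos, one_mul]
    exact Real.log_le_log (by norm_num) (by exact_mod_cast hd)
  constructor
  · -- fully separable case
    intro n hn ρ hρ hsep
    rcases Nat.eq_zero_or_pos N with rfl | hN
    · have h0 : povmCN 0 ρ P = 0 := by unfold povmCN; simp
      rw [h0]
      simp only [Nat.cast_zero, div_zero, sub_zero]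
      linarith
    · obtain ⟨J, p, σ, hp, hp1, hσ, hρeq⟩ := hsep
      set L := Real.logb 2 d with hL
      set sh : Fin N → Fin n → Fin J → ℝ :=
        fun k l j => shannon (fun i => (Matrix.trace (P k i * σ j l)).re) with hsh
      have key : ∀ k l, mutualInfo (povmJointProb ρ (P k)) l ≤ L - ∑ j, p j * sh k l j :=
        fun k l => Priv.mutualInfo_sep_le (P k) (hP k).1 (hP k).2 p σ hp hσ hρeq hρ.2 l
      have h1 : ∑ k, ∑ l, mutualInfo (povmJointProb ρ (P k)) l
          ≤ ∑ k : Fin N, ∑ l : Fin n, (L - ∑ j, p j * sh k l j) :=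
        Finset.sum_le_sum fun k _ => Finset.sum_le_sum fun l _ => key k l
      have h2 : ∑ k : Fin N, ∑ l : Fin n, (L - ∑ j, p j * sh k l j)
          = (N:ℝ) * ((n:ℝ) * L) - ∑ k, ∑ l, ∑ j, p j * sh k l j := by
        simp only [Finset.sum_sub_distrib, Finset.sum_const, Finset.card_univ,
          Fintype.card_fin, nsmul_eq_mul]
      have h3 : (n:ℝ) * F ≤ ∑ k, ∑ l, ∑ j, p j * sh k l j := by
        have hswap : ∑ k, ∑ l, ∑ j, p j * sh k l j
            = ∑ l, ∑ j, p j * ∑ k, sh k l j := by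
          rw [Finset.sum_comm]
          refine Finset.sum_congr rfl fun l _ => ?_
          rw [Finset.sum_comm]
          exact Finset.sum_congr rfl fun j _ => (Finset.mul_sum _ _ _).symm
        rw [hswap]
        have hl : ∀ l : Fin n, F ≤ ∑ j, p j * ∑ k, sh k l j := by
          intro l
          calc F = ∑ j, p j * F := by rw [← Finset.sum_mul, hp1, one_mul]
            _ ≤ ∑ j, p j * ∑ k, sh k l j :=
                Finset.sum_le_sum fun j _ =>
                  mul_le_mul_of_nonneg_left (hF (σ j l) (hσ j l)) (hp j)
        calc (n:ℝ) * F = ∑ _l : Fin n, F := by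
              simp [Finset.sum_const, Finset.card_univ, nsmul_eq_mul]
          _ ≤ ∑ l, ∑ j, p j * ∑ k, sh k l j := Finset.sum_le_sum fun l _ => hl l
      have hfinal : ∑ k, ∑ l, mutualInfo (povmJointProb ρ (P k)) l
          ≤ (N:ℝ) * ((n:ℝ) * L) - (n:ℝ) * F := by
        refine le_trans h1 ?_
        rw [h2]
        linarith
      have hn' : (0:ℝ) < (n:ℝ) := by exact_mod_cast hn
      have hN' : (0:ℝ) < (N:ℝ) := by exact_mod_cast hN
      unfold povmCN
      have hmul : 1 / ((n:ℝ) * N) * (∑ k, ∑ l, mutualInfo (povmJointProb ρ (P k)) l)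
          ≤ 1 / ((n:ℝ) * N) * ((N:ℝ) * ((n:ℝ) * L) - (n:ℝ) * F) :=
        mul_le_mul_of_nonneg_left hfinal (by positivity)
      refine le_trans hmul (le_of_eq ?_)
      field_simp
  · -- biseparable case
    intro ρ hρ hbisep
    rcases Nat.eq_zero_or_pos N with rfl | hN
    · have h0 : povmCN 0 ρ P = 0 := by unfold povmCN; simp
      rw [h0]
      simp only [Nat.cast_zero, mul_zero, div_zero, sub_zero]
      linarith
    · obtain ⟨J, p, σ, τ, hp, hp1, hσ, hτ, hρeq⟩ := hbisep
      set L := Real.logb 2 d with hL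
      set sh : Fin N → Fin 3 → Fin J → ℝ :=
        fun k m j => shannon (fun i => (Matrix.trace (P k i * σ j m)).re) with hsh
      have key : ∀ k m, mutualInfo (povmJointProb ρ (P k)) m ≤ L - ∑ j, p j m * sh k m j :=
        fun k m => Priv.mutualInfo_bisep_le (P k) (hP k).1 (hP k).2 p σ τ hp hσ hτ hρeq hρ.2 m
      have h1 : ∑ k, ∑ m, mutualInfo (povmJointProb ρ (P k)) m
          ≤ ∑ k : Fin N, ∑ m : Fin 3, (L - ∑ j, p j m * sh k m j) :=
        Finset.sum_le_sum fun k _ => Finset.sum_le_sum fun m _ => key k m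
      have h2 : ∑ k : Fin N, ∑ m : Fin 3, (L - ∑ j, p j m * sh k m j)
          = (N:ℝ) * ((3:ℝ) * L) - ∑ k, ∑ m, ∑ j, p j m * sh k m j := by
        simp only [Finset.sum_sub_distrib, Finset.sum_const, Finset.card_univ,
          Fintype.card_fin, nsmul_eq_mul]
        norm_num
      have h3 : F ≤ ∑ k, ∑ m, ∑ j, p j m * sh k m j := by
        have hswap : ∑ k, ∑ m, ∑ j, p j m * sh k m j
            = ∑ m : Fin 3, ∑ j, p j m * ∑ k, sh k m j := by
          rw [Finset.sum_comm]
          refine Finset.sum_congr rfl fun m _ => ?_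
          rw [Finset.sum_comm]
          exact Finset.sum_congr rfl fun j _ => (Finset.mul_sum _ _ _).symm
        rw [hswap]
        have hstep : ∑ m : Fin 3, ∑ j, p j m * F
            ≤ ∑ m : Fin 3, ∑ j, p j m * ∑ k, sh k m j :=
          Finset.sum_le_sum fun m _ => Finset.sum_le_sum fun j _ =>
            mul_le_mul_of_nonneg_left (hF (σ j m) (hσ j m)) (hp j m)
        have hone : ∑ m : Fin 3, ∑ j, p j m * F = F := by
          have : ∑ m : Fin 3, ∑ j, p j m * F = (∑ j, ∑ m : Fin 3, p j m) * F := by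
            rw [Finset.sum_comm, Finset.sum_mul]
            exact Finset.sum_congr rfl fun j _ => (Finset.sum_mul _ _ _).symm
          rw [this, hp1, one_mul]
        linarith
      have hfinal : ∑ k, ∑ m, mutualInfo (povmJointProb ρ (P k)) m
          ≤ (N:ℝ) * ((3:ℝ) * L) - F := by
        refine le_trans h1 ?_
        rw [h2]
        linarith
      have hN' : (0:ℝ) < (N:ℝ) := by exact_mod_cast hN
      unfold povmCN
      have hmul : 1 / (((3:ℕ):ℝ) * (N:ℝ)) * (∑ k, ∑ m, mutualInfo (povmJointProb ρ (P k)) m)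
          ≤ 1 / (((3:ℕ):ℝ) * (N:ℝ)) * ((N:ℝ) * ((3:ℝ) * L) - F) :=
        mul_le_mul_of_nonneg_left hfinal (by positivity)
      refine le_trans hmul (le_of_eq ?_)
      push_cast
      field_simp

end
end Paper
end
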